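/- Consider the ℚ-vector space of polynomials in the twelve variables a1, a2, b1, b2, …, f1, f2 that are homogeneous of degree 1 in each of the six pairs (a1,a2), …, (f1,f2), invariant under the simultaneous SL₂(ℚ)-substitution acting on all six pairs, invariant under the exchange J (a↔b, e↔f simultaneously), invariant under the exchange K (b↔c, f↔d simultaneously), and sent to their negative by the exchange L (a↔e, b↔f, c↔d simultaneously). This vector space is 2-dimensional, with basis S = (da)(fc)(eb) − (ce)(bd)(af) and (ae)(bf)(cd). -/
import Mathlib

open MvPolynomial

/-- The bracket `(uv) = u1·v2 − u2·v1` of letters `u, v ∈ {a,…,f}` (indexed by `Fin 6`,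
with `a = 0, …, f = 5`), as a polynomial in the twelve variables indexed by
`Fin 6 × Fin 2`. -/
noncomputable def brP (u v : Fin 6) : MvPolynomial (Fin 6 × Fin 2) ℚ :=
  X (u, 0) * X (v, 1) - X (u, 1) * X (v, 0)

/-- `S = (da)(fc)(eb) − (ce)(bd)(af)`. -/
noncomputable def SP : MvPolynomial (Fin 6 × Fin 2) ℚ :=
  brP 3 0 * brP 5 2 * brP 4 1 - brP 2 4 * brP 1 3 * brP 0 5

/-- `(ae)(bf)(cd)`. -/
noncomputable def BP : MvPolynomial (Fin 6 × Fin 2) ℚ :=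
  brP 0 4 * brP 1 5 * brP 2 3

/-- `P` is homogeneous of degree `1` in each of the six pairs of variables. -/
def Multilin (P : MvPolynomial (Fin 6 × Fin 2) ℚ) : Prop :=
  IsWeightedHomogeneous (fun p : Fin 6 × Fin 2 => (Pi.single p.1 1 : Fin 6 → ℕ)) P
    (fun _ => 1)

/-- `P` is invariant under the simultaneous `SL₂(ℚ)`-substitution
`(u1,u2) ↦ (u1,u2)·g` on all six pairs of variables. -/
def SL2Invariant (P : MvPolynomial (Fin 6 × Fin 2) ℚ) : Prop :=
  ∀ g : Matrix.SpecialLinearGroup (Fin 2) ℚ,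
    aeval (fun p : Fin 6 × Fin 2 =>
      ∑ j : Fin 2, C ((g : Matrix (Fin 2) (Fin 2) ℚ) j p.2) * X (p.1, j)) P = P

/-- Exchange of the letters indexed by a permutation `π` of `Fin 6`. -/
noncomputable def exchange (π : Equiv.Perm (Fin 6)) :
    MvPolynomial (Fin 6 × Fin 2) ℚ → MvPolynomial (Fin 6 × Fin 2) ℚ :=
  rename fun p => (π p.1, p.2)

section Aux

variable {α : Type*}

lemma cv0 (x0 x1 x2 x3 x4 x5 : α) : ![x0,x1,x2,x3,x4,x5] 0 = x0 := rfl
lemma cv1 (x0 x1 x2 x3 x4 x5 : α) : ![x0,x1,x2,x3,x4,x5] 1 = x1 := rfl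
lemma cv2 (x0 x1 x2 x3 x4 x5 : α) : ![x0,x1,x2,x3,x4,x5] 2 = x2 := rfl
lemma cv3 (x0 x1 x2 x3 x4 x5 : α) : ![x0,x1,x2,x3,x4,x5] 3 = x3 := rfl
lemma cv4 (x0 x1 x2 x3 x4 x5 : α) : ![x0,x1,x2,x3,x4,x5] 4 = x4 := rfl
lemma cv5 (x0 x1 x2 x3 x4 x5 : α) : ![x0,x1,x2,x3,x4,x5] 5 = x5 := rfl
lemma mA00 (a b c d : α) : (Matrix.of ![![a,b],![c,d]]) 0 0 = a := rfl
lemma mA01 (a b c d : α) : (Matrix.of ![![a,b],![c,d]]) 0 1 = b := rfl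
lemma mA10 (a b c d : α) : (Matrix.of ![![a,b],![c,d]]) 1 0 = c := rfl
lemma mA11 (a b c d : α) : (Matrix.of ![![a,b],![c,d]]) 1 1 = d := rfl

lemma fin2cases (x : Fin 2) : x = 0 ∨ x = 1 := by fin_cases x <;> simp

end Aux

/-- Enumeration equivalence for `Fin 6 → Fin 2`. -/
def e6 : (Fin 2 × Fin 2 × Fin 2 × Fin 2 × Fin 2 × Fin 2) ≃ (Fin 6 → Fin 2) where
  toFun x := ![x.1, x.2.1, x.2.2.1, x.2.2.2.1, x.2.2.2.2.1, x.2.2.2.2.2]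
  invFun s := (s 0, s 1, s 2, s 3, s 4, s 5)
  left_inv := by decide
  right_inv := by decide

lemma sum_fun6 {A : Type*} [AddCommMonoid A] (f : (Fin 6 → Fin 2) → A) :
    ∑ s : Fin 6 → Fin 2, f s =
      ∑ x0 : Fin 2, ∑ x1 : Fin 2, ∑ x2 : Fin 2, ∑ x3 : Fin 2, ∑ x4 : Fin 2, ∑ x5 : Fin 2,
        f ![x0, x1, x2, x3, x4, x5] := by
  rw [← Equiv.sum_comp e6 f]
  simp [Fintype.sum_prod_type, e6]

/-- Exponent finsupp of the multilinear monomial with pattern `s`. -/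
noncomputable def expo (s : Fin 6 → Fin 2) : (Fin 6 × Fin 2) →₀ ℕ :=
  ∑ i, Finsupp.single (i, s i) 1

/-- The multilinear monomial with pattern `s`. -/
noncomputable def Mn (s : Fin 6 → Fin 2) : MvPolynomial (Fin 6 × Fin 2) ℚ :=
  ∏ i, X (i, s i)

lemma expo_apply (s : Fin 6 → Fin 2) (p : Fin 6 × Fin 2) :
    expo s p = if s p.1 = p.2 then 1 else 0 := by
  rw [expo, Finsupp.finset_sum_apply]
  rw [Finset.sum_eq_single p.1]
  · rw [Finsupp.single_apply]
    by_cases h : s p.1 = p.2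
    · simp [h]
    · rw [if_neg h, if_neg]
      rintro he
      exact h (congrArg Prod.snd he)
  · intro b _ hb
    rw [Finsupp.single_apply, if_neg]
    rintro rfl
    exact hb rfl
  · simp

lemma expo_inj : Function.Injective expo := by
  intro s t h
  funext i
  by_contra hne
  have h1 : expo s (i, s i) = expo t (i, s i) := congrArg (fun f => f (i, s i)) h
  rw [expo_apply, expo_apply] at h1
  rw [if_pos rfl, if_neg (fun he => hne he.symm)] at h1
  exact one_ne_zero h1

lemma Mn_eq (s : Fin 6 → Fin 2) : Mn s = monomial (expo s) 1 := by
  rw [Mn, expo, Fin.prod_univ_six, Fin.sum_univ_six]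
  simp only [X, monomial_mul, one_mul]

lemma coeff_Mn (t s : Fin 6 → Fin 2) :
    coeff (expo t) (Mn s) = if s = t then 1 else 0 := by
  rw [Mn_eq, coeff_monomial]
  by_cases h : s = t
  · simp [h]
  · rw [if_neg (fun he => h (expo_inj he)), if_neg h]

lemma weight_pair (d : (Fin 6 × Fin 2) →₀ ℕ) (i : Fin 6) :
    (Finsupp.weight (fun p : Fin 6 × Fin 2 => (Pi.single p.1 1 : Fin 6 → ℕ)) d) i
      = d (i, 0) + d (i, 1) := by
  rw [Finsupp.weight_apply, Finsupp.sum_fintype _ _ (by simp)]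
  rw [Finset.sum_apply]
  rw [Fintype.sum_prod_type]
  rw [Finset.sum_eq_single i]
  · simp [Fin.sum_univ_two]
  · intro b _ hb
    simp [Pi.single_apply, Ne.symm hb]
  · simp

lemma decomp (P : MvPolynomial (Fin 6 × Fin 2) ℚ) (hM : Multilin P) :
    P = ∑ s : Fin 6 → Fin 2, C (coeff (expo s) P) * Mn s := by
  have himg : P.support ⊆ Finset.univ.image expo := by
    intro d hd
    have hw := hM (mem_support_iff.mp hd)
    have hsum : ∀ i : Fin 6, d (i, 0) + d (i, 1) = 1 := by
      intro i
      have := congrFun hw i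
      rwa [weight_pair] at this
    refine Finset.mem_image.mpr ⟨fun i => if d (i, 0) = 1 then 0 else 1, Finset.mem_univ _, ?_⟩
    ext ⟨i, j⟩
    rw [expo_apply]
    have h2 := hsum i
    fin_cases j <;> by_cases hd1 : d (i, 0) = 1 <;> simp [hd1] <;> omega
  conv_lhs => rw [as_sum P]
  rw [Finset.sum_subset himg (fun d _ hd => by rw [notMem_support_iff.mp hd, monomial_zero])]
  rw [Finset.sum_image (fun a _ b _ h => expo_inj h)]
  refine Finset.sum_congr rfl fun s _ => ?_
  rw [Mn_eq, C_mul_monomial, mul_one]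

lemma coeff_aeval_Mn (g : Matrix (Fin 2) (Fin 2) ℚ) (s t : Fin 6 → Fin 2) :
    coeff (expo t) (aeval (fun p : Fin 6 × Fin 2 =>
      ∑ j : Fin 2, C (g j p.2) * X (p.1, j)) (Mn s)) = ∏ i, g (t i) (s i) := by
  rw [Mn, map_prod]
  simp only [aeval_X]
  rw [Finset.prod_univ_sum]
  rw [Fintype.piFinset_univ]
  have h1 : ∀ x : Fin 6 → Fin 2,
      (∏ i, C (g (x i) (s i)) * X (i, x i) : MvPolynomial (Fin 6 × Fin 2) ℚ)
        = C (∏ i, g (x i) (s i)) * Mn x := by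
    intro x
    rw [Finset.prod_mul_distrib, map_prod, Mn]
  rw [Finset.sum_congr rfl fun x _ => h1 x]
  rw [coeff_sum]
  simp only [coeff_C_mul, coeff_Mn]
  rw [Finset.sum_eq_single t]
  · simp
  · intro b _ hb
    simp [hb]
  · simp

lemma key (P : MvPolynomial (Fin 6 × Fin 2) ℚ)
    (hd : P = ∑ s : Fin 6 → Fin 2, C (coeff (expo s) P) * Mn s)
    (g : Matrix (Fin 2) (Fin 2) ℚ)
    (hg : aeval (fun p : Fin 6 × Fin 2 =>
      ∑ j : Fin 2, C (g j p.2) * X (p.1, j)) P = P) (t : Fin 6 → Fin 2) :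
    ∑ s : Fin 6 → Fin 2, (∏ i, g (t i) (s i)) * coeff (expo s) P = coeff (expo t) P := by
  conv_rhs => rw [← hg]
  conv_rhs => rw [hd]
  rw [map_sum, coeff_sum]
  refine Finset.sum_congr rfl fun s _ => ?_
  rw [map_mul, aeval_C, algebraMap_eq, coeff_C_mul, coeff_aeval_Mn, mul_comm]

def dvec : Fin 2 → ℚ := ![2, 2⁻¹]

lemma diag (P : MvPolynomial (Fin 6 × Fin 2) ℚ)
    (hd : P = ∑ s : Fin 6 → Fin 2, C (coeff (expo s) P) * Mn s)
    (hg : aeval (fun p : Fin 6 × Fin 2 =>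
      ∑ j : Fin 2, C ((!![(2:ℚ),0;0,2⁻¹]) j p.2) * X (p.1, j)) P = P) (t : Fin 6 → Fin 2) :
    (∏ i, dvec (t i)) * coeff (expo t) P = coeff (expo t) P := by
  have h := key P hd !![(2:ℚ),0;0,2⁻¹] hg t
  rw [Finset.sum_eq_single t] at h
  · rw [← h]
    congr 1
    refine Finset.prod_congr rfl fun i _ => ?_
    obtain hti | hti := fin2cases (t i) <;> rw [hti] <;> norm_num [dvec]
  · intro s _ hs
    rw [Function.ne_iff] at hs
    obtain ⟨i, hi⟩ := hs
    rw [Finset.prod_eq_zero (Finset.mem_univ i), zero_mul]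
    obtain h1 | h1 := fin2cases (t i) <;> obtain h2 | h2 := fin2cases (s i) <;>
      first | (exact absurd (h2.trans h1.symm) hi) | (rw [h1, h2]; norm_num)
  · simp

lemma exch (P : MvPolynomial (Fin 6 × Fin 2) ℚ) (π : Equiv.Perm (Fin 6))
    (t t' : Fin 6 → Fin 2) (h : ∀ i, t (π i) = t' i) :
    coeff (expo t) (exchange π P) = coeff (expo t') P := by
  have hinj : Function.Injective (fun p : Fin 6 × Fin 2 => (π p.1, p.2)) := by
    intro p q hpq
    obtain ⟨h1, h2⟩ := Prod.mk.injEq .. ▸ hpq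
    exact Prod.ext (π.injective h1) h2
  have hmap : expo t = Finsupp.mapDomain (fun p : Fin 6 × Fin 2 => (π p.1, p.2)) (expo t') := by
    rw [expo, expo, Finsupp.mapDomain_finset_sum]
    simp only [Finsupp.mapDomain_single]
    rw [← Equiv.sum_comp π (fun j => Finsupp.single (j, t j) 1)]
    refine Finset.sum_congr rfl fun i _ => ?_
    rw [h i]
  rw [hmap, exchange, coeff_rename_mapDomain _ hinj]

lemma aeval_brP (g : Matrix (Fin 2) (Fin 2) ℚ) (hdet : g 0 0 * g 1 1 - g 0 1 * g 1 0 = 1)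
    (u v : Fin 6) :
    aeval (fun p : Fin 6 × Fin 2 => ∑ j : Fin 2, C (g j p.2) * X (p.1, j)) (brP u v)
      = brP u v := by
  have hdet' : (C (g 0 0) * C (g 1 1) - C (g 0 1) * C (g 1 0)
      : MvPolynomial (Fin 6 × Fin 2) ℚ) = 1 := by
    rw [← map_mul, ← map_mul, ← map_sub, hdet, map_one]
  simp only [brP, map_sub, map_mul, aeval_X, Fin.sum_univ_two]
  linear_combination (X (u, 0) * X (v, 1) - X (u, 1) * X (v, 0)
    : MvPolynomial (Fin 6 × Fin 2) ℚ) * hdet'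

lemma det_coe (g : Matrix.SpecialLinearGroup (Fin 2) ℚ) :
    (g : Matrix (Fin 2) (Fin 2) ℚ) 0 0 * (g : Matrix (Fin 2) (Fin 2) ℚ) 1 1
      - (g : Matrix (Fin 2) (Fin 2) ℚ) 0 1 * (g : Matrix (Fin 2) (Fin 2) ℚ) 1 0 = 1 := by
  have := g.2
  rwa [Matrix.det_fin_two] at this

lemma SL2_SP : SL2Invariant SP := by
  intro g
  simp only [SP, map_sub, map_mul, aeval_brP _ (det_coe g)]

lemma SL2_BP : SL2Invariant BP := by
  intro g
  simp only [BP, map_mul, aeval_brP _ (det_coe g)]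


lemma exch_J_SP : exchange (Equiv.swap 0 1 * Equiv.swap 4 5 : Equiv.Perm (Fin 6)) SP = SP := by
  have h0 : (Equiv.swap 0 1 * Equiv.swap 4 5 : Equiv.Perm (Fin 6)) 0 = 1 := by decide
  have h1 : (Equiv.swap 0 1 * Equiv.swap 4 5 : Equiv.Perm (Fin 6)) 1 = 0 := by decide
  have h2 : (Equiv.swap 0 1 * Equiv.swap 4 5 : Equiv.Perm (Fin 6)) 2 = 2 := by decide
  have h3 : (Equiv.swap 0 1 * Equiv.swap 4 5 : Equiv.Perm (Fin 6)) 3 = 3 := by decide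
  have h4 : (Equiv.swap 0 1 * Equiv.swap 4 5 : Equiv.Perm (Fin 6)) 4 = 5 := by decide
  have h5 : (Equiv.swap 0 1 * Equiv.swap 4 5 : Equiv.Perm (Fin 6)) 5 = 4 := by decide
  simp only [exchange, SP, brP, map_sub, map_mul, rename_X, h0, h1, h2, h3, h4, h5]
  ring

lemma exch_J_BP : exchange (Equiv.swap 0 1 * Equiv.swap 4 5 : Equiv.Perm (Fin 6)) BP = BP := by
  have h0 : (Equiv.swap 0 1 * Equiv.swap 4 5 : Equiv.Perm (Fin 6)) 0 = 1 := by decide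
  have h1 : (Equiv.swap 0 1 * Equiv.swap 4 5 : Equiv.Perm (Fin 6)) 1 = 0 := by decide
  have h2 : (Equiv.swap 0 1 * Equiv.swap 4 5 : Equiv.Perm (Fin 6)) 2 = 2 := by decide
  have h3 : (Equiv.swap 0 1 * Equiv.swap 4 5 : Equiv.Perm (Fin 6)) 3 = 3 := by decide
  have h4 : (Equiv.swap 0 1 * Equiv.swap 4 5 : Equiv.Perm (Fin 6)) 4 = 5 := by decide
  have h5 : (Equiv.swap 0 1 * Equiv.swap 4 5 : Equiv.Perm (Fin 6)) 5 = 4 := by decide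
  simp only [exchange, BP, brP, map_sub, map_mul, rename_X, h0, h1, h2, h3, h4, h5]
  ring

lemma exch_K_SP : exchange (Equiv.swap 1 2 * Equiv.swap 5 3 : Equiv.Perm (Fin 6)) SP = SP := by
  have h0 : (Equiv.swap 1 2 * Equiv.swap 5 3 : Equiv.Perm (Fin 6)) 0 = 0 := by decide
  have h1 : (Equiv.swap 1 2 * Equiv.swap 5 3 : Equiv.Perm (Fin 6)) 1 = 2 := by decide
  have h2 : (Equiv.swap 1 2 * Equiv.swap 5 3 : Equiv.Perm (Fin 6)) 2 = 1 := by decide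
  have h3 : (Equiv.swap 1 2 * Equiv.swap 5 3 : Equiv.Perm (Fin 6)) 3 = 5 := by decide
  have h4 : (Equiv.swap 1 2 * Equiv.swap 5 3 : Equiv.Perm (Fin 6)) 4 = 4 := by decide
  have h5 : (Equiv.swap 1 2 * Equiv.swap 5 3 : Equiv.Perm (Fin 6)) 5 = 3 := by decide
  simp only [exchange, SP, brP, map_sub, map_mul, rename_X, h0, h1, h2, h3, h4, h5]
  ring

lemma exch_K_BP : exchange (Equiv.swap 1 2 * Equiv.swap 5 3 : Equiv.Perm (Fin 6)) BP = BP := by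
  have h0 : (Equiv.swap 1 2 * Equiv.swap 5 3 : Equiv.Perm (Fin 6)) 0 = 0 := by decide
  have h1 : (Equiv.swap 1 2 * Equiv.swap 5 3 : Equiv.Perm (Fin 6)) 1 = 2 := by decide
  have h2 : (Equiv.swap 1 2 * Equiv.swap 5 3 : Equiv.Perm (Fin 6)) 2 = 1 := by decide
  have h3 : (Equiv.swap 1 2 * Equiv.swap 5 3 : Equiv.Perm (Fin 6)) 3 = 5 := by decide
  have h4 : (Equiv.swap 1 2 * Equiv.swap 5 3 : Equiv.Perm (Fin 6)) 4 = 4 := by decide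
  have h5 : (Equiv.swap 1 2 * Equiv.swap 5 3 : Equiv.Perm (Fin 6)) 5 = 3 := by decide
  simp only [exchange, BP, brP, map_sub, map_mul, rename_X, h0, h1, h2, h3, h4, h5]
  ring

lemma exch_L_SP : exchange (Equiv.swap 0 4 * Equiv.swap 1 5 * Equiv.swap 2 3 : Equiv.Perm (Fin 6)) SP = -SP := by
  have h0 : (Equiv.swap 0 4 * Equiv.swap 1 5 * Equiv.swap 2 3 : Equiv.Perm (Fin 6)) 0 = 4 := by decide
  have h1 : (Equiv.swap 0 4 * Equiv.swap 1 5 * Equiv.swap 2 3 : Equiv.Perm (Fin 6)) 1 = 5 := by decide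
  have h2 : (Equiv.swap 0 4 * Equiv.swap 1 5 * Equiv.swap 2 3 : Equiv.Perm (Fin 6)) 2 = 3 := by decide
  have h3 : (Equiv.swap 0 4 * Equiv.swap 1 5 * Equiv.swap 2 3 : Equiv.Perm (Fin 6)) 3 = 2 := by decide
  have h4 : (Equiv.swap 0 4 * Equiv.swap 1 5 * Equiv.swap 2 3 : Equiv.Perm (Fin 6)) 4 = 0 := by decide
  have h5 : (Equiv.swap 0 4 * Equiv.swap 1 5 * Equiv.swap 2 3 : Equiv.Perm (Fin 6)) 5 = 1 := by decide
  simp only [exchange, SP, brP, map_sub, map_mul, rename_X, h0, h1, h2, h3, h4, h5]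
  ring

lemma exch_L_BP : exchange (Equiv.swap 0 4 * Equiv.swap 1 5 * Equiv.swap 2 3 : Equiv.Perm (Fin 6)) BP = -BP := by
  have h0 : (Equiv.swap 0 4 * Equiv.swap 1 5 * Equiv.swap 2 3 : Equiv.Perm (Fin 6)) 0 = 4 := by decide
  have h1 : (Equiv.swap 0 4 * Equiv.swap 1 5 * Equiv.swap 2 3 : Equiv.Perm (Fin 6)) 1 = 5 := by decide
  have h2 : (Equiv.swap 0 4 * Equiv.swap 1 5 * Equiv.swap 2 3 : Equiv.Perm (Fin 6)) 2 = 3 := by decide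
  have h3 : (Equiv.swap 0 4 * Equiv.swap 1 5 * Equiv.swap 2 3 : Equiv.Perm (Fin 6)) 3 = 2 := by decide
  have h4 : (Equiv.swap 0 4 * Equiv.swap 1 5 * Equiv.swap 2 3 : Equiv.Perm (Fin 6)) 4 = 0 := by decide
  have h5 : (Equiv.swap 0 4 * Equiv.swap 1 5 * Equiv.swap 2 3 : Equiv.Perm (Fin 6)) 5 = 1 := by decide
  simp only [exchange, BP, brP, map_sub, map_mul, rename_X, h0, h1, h2, h3, h4, h5]
  ring

lemma SP_eq : SP = C (-2) * Mn ![0,0,0,1,1,1] + C (1) * Mn ![0,0,1,1,0,1] + C (1) * Mn ![0,0,1,1,1,0] + C (1) * Mn ![0,1,0,0,1,1] + C (1) * Mn ![0,1,0,1,0,1] + C (-1) * Mn ![0,1,1,0,0,1] + C (-1) * Mn ![0,1,1,1,0,0] + C (1) * Mn ![1,0,0,0,1,1] + C (1) * Mn ![1,0,0,1,1,0] + C (-1) * Mn ![1,0,1,0,1,0] + C (-1) * Mn ![1,0,1,1,0,0] + C (-1) * Mn ![1,1,0,0,0,1] + C (-1) * Mn ![1,1,0,0,1,0] + C (2) * Mn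 ![1,1,1,0,0,0] := by
  simp only [SP, brP, Mn, Fin.prod_univ_six, cv0, cv1, cv2, cv3, cv4, cv5,
    map_neg, map_ofNat, map_one]
  ring

lemma BP_eq : BP = C (1) * Mn ![0,0,0,1,1,1] + C (-1) * Mn ![0,0,1,0,1,1] + C (-1) * Mn ![0,1,0,1,1,0] + C (1) * Mn ![0,1,1,0,1,0] + C (-1) * Mn ![1,0,0,1,0,1] + C (1) * Mn ![1,0,1,0,0,1] + C (1) * Mn ![1,1,0,1,0,0] + C (-1) * Mn ![1,1,1,0,0,0] := by
  simp only [BP, brP, Mn, Fin.prod_univ_six, cv0, cv1, cv2, cv3, cv4, cv5,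
    map_neg, map_ofNat, map_one]
  ring


lemma coeff_SP_A : coeff (expo ![0,0,1,1,0,1]) SP = 1 := by
  rw [SP_eq]
  simp (config := { decide := true }) only [coeff_add, coeff_C_mul, coeff_Mn]
  norm_num

lemma coeff_SP_B : coeff (expo ![0,0,0,1,1,1]) SP = -2 := by
  rw [SP_eq]
  simp (config := { decide := true }) only [coeff_add, coeff_C_mul, coeff_Mn]
  norm_num

lemma coeff_BP_A : coeff (expo ![0,0,1,1,0,1]) BP = 0 := by
  rw [BP_eq]
  simp (config := { decide := true }) only [coeff_add, coeff_C_mul, coeff_Mn]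
  norm_num

lemma coeff_BP_B : coeff (expo ![0,0,0,1,1,1]) BP = 1 := by
  rw [BP_eq]
  simp (config := { decide := true }) only [coeff_add, coeff_C_mul, coeff_Mn]
  norm_num

lemma br_hom (u v : Fin 6) :
    brP u v ∈ weightedHomogeneousSubmodule ℚ
      (fun p : Fin 6 × Fin 2 => (Pi.single p.1 1 : Fin 6 → ℕ))
      (Pi.single u 1 + Pi.single v 1) := by
  rw [brP]
  refine Submodule.sub_mem _ ?_ ?_ <;>
    rw [mem_weightedHomogeneousSubmodule] <;>
    exact (isWeightedHomogeneous_X ℚ _ _).mul (isWeightedHomogeneous_X ℚ _ _)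

lemma multilin_SP : Multilin SP := by
  rw [Multilin, ← mem_weightedHomogeneousSubmodule, SP]
  refine Submodule.sub_mem _ ?_ ?_
  · have h := ((br_hom 3 0).mul (br_hom 5 2)).mul (br_hom 4 1)
    rwa [show ((Pi.single (3:Fin 6) 1 + Pi.single (0:Fin 6) 1)
      + (Pi.single (5:Fin 6) 1 + Pi.single (2:Fin 6) 1))
      + (Pi.single (4:Fin 6) 1 + Pi.single (1:Fin 6) 1) = (fun _ => (1:ℕ)) from by decide] at h
  · have h := ((br_hom 2 4).mul (br_hom 1 3)).mul (br_hom 0 5)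
    rwa [show ((Pi.single (2:Fin 6) 1 + Pi.single (4:Fin 6) 1)
      + (Pi.single (1:Fin 6) 1 + Pi.single (3:Fin 6) 1))
      + (Pi.single (0:Fin 6) 1 + Pi.single (5:Fin 6) 1) = (fun _ => (1:ℕ)) from by decide] at h

lemma multilin_BP : Multilin BP := by
  rw [Multilin, ← mem_weightedHomogeneousSubmodule, BP]
  have h := ((br_hom 0 4).mul (br_hom 1 5)).mul (br_hom 2 3)
  rwa [show ((Pi.single (0:Fin 6) 1 + Pi.single (4:Fin 6) 1)
    + (Pi.single (1:Fin 6) 1 + Pi.single (5:Fin 6) 1))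
    + (Pi.single (2:Fin 6) 1 + Pi.single (3:Fin 6) 1) = (fun _ => (1:ℕ)) from by decide] at h


lemma exchange_add_smul (π : Equiv.Perm (Fin 6)) (α β : ℚ) :
    exchange π (α • SP + β • BP) = α • exchange π SP + β • exchange π BP := by
  simp only [exchange, map_add, map_smul]


set_option maxHeartbeats 4000000 in
/-- The ℚ-vector space of polynomials in the twelve variables `a1, a2, …, f1, f2` that
are multilinear (homogeneous of degree 1 in each of the six pairs), invariant under the
simultaneous `SL₂(ℚ)`-action, invariant under `J` (`a↔b`, `e↔f`) and `K` (`b↔c`, `f↔d`),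
and sent to their negative by `L` (`a↔e`, `b↔f`, `c↔d`), is 2-dimensional with basis
`S = (da)(fc)(eb) − (ce)(bd)(af)` and `(ae)(bf)(cd)`. -/
theorem pascal_stmt_17 :
    (∀ P : MvPolynomial (Fin 6 × Fin 2) ℚ,
      (Multilin P ∧ SL2Invariant P ∧
        exchange (Equiv.swap 0 1 * Equiv.swap 4 5) P = P ∧
        exchange (Equiv.swap 1 2 * Equiv.swap 5 3) P = P ∧
        exchange (Equiv.swap 0 4 * Equiv.swap 1 5 * Equiv.swap 2 3) P = -P) ↔
      ∃ α β : ℚ, P = α • SP + β • BP) ∧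
    LinearIndependent ℚ ![SP, BP] := by
  constructor
  · intro P
    constructor
    · rintro ⟨hM, hSL, hJ, hK, hL⟩
      have hdec := decomp P hM
      -- diagonal invariance: unbalanced coefficients vanish
      have hgD : aeval (fun p : Fin 6 × Fin 2 =>
          ∑ j : Fin 2, C ((!![(2:ℚ),0;0,2⁻¹]) j p.2) * X (p.1, j)) P = P :=
        hSL ⟨!![(2:ℚ),0;0,2⁻¹], by norm_num [Matrix.det_fin_two_of]⟩
      have hz0 : coeff (expo ![0,0,0,0,0,0]) P = 0 := by
        have h := diag P hdec hgD ![0,0,0,0,0,0]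
        rw [Fin.prod_univ_six] at h
        norm_num [dvec, cv0, cv1, cv2, cv3, cv4, cv5] at h
        linarith
      have hz1 : coeff (expo ![0,0,0,0,0,1]) P = 0 := by
        have h := diag P hdec hgD ![0,0,0,0,0,1]
        rw [Fin.prod_univ_six] at h
        norm_num [dvec, cv0, cv1, cv2, cv3, cv4, cv5] at h
        linarith
      have hz2 : coeff (expo ![0,0,0,0,1,0]) P = 0 := by
        have h := diag P hdec hgD ![0,0,0,0,1,0]
        rw [Fin.prod_univ_six] at h
        norm_num [dvec, cv0, cv1, cv2, cv3, cv4, cv5] at h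
        linarith
      have hz3 : coeff (expo ![0,0,0,0,1,1]) P = 0 := by
        have h := diag P hdec hgD ![0,0,0,0,1,1]
        rw [Fin.prod_univ_six] at h
        norm_num [dvec, cv0, cv1, cv2, cv3, cv4, cv5] at h
        linarith
      have hz4 : coeff (expo ![0,0,0,1,0,0]) P = 0 := by
        have h := diag P hdec hgD ![0,0,0,1,0,0]
        rw [Fin.prod_univ_six] at h
        norm_num [dvec, cv0, cv1, cv2, cv3, cv4, cv5] at h
        linarith
      have hz5 : coeff (expo ![0,0,0,1,0,1]) P = 0 := by
        have h := diag P hdec hgD ![0,0,0,1,0,1]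
        rw [Fin.prod_univ_six] at h
        norm_num [dvec, cv0, cv1, cv2, cv3, cv4, cv5] at h
        linarith
      have hz6 : coeff (expo ![0,0,0,1,1,0]) P = 0 := by
        have h := diag P hdec hgD ![0,0,0,1,1,0]
        rw [Fin.prod_univ_six] at h
        norm_num [dvec, cv0, cv1, cv2, cv3, cv4, cv5] at h
        linarith
      have hz7 : coeff (expo ![0,0,1,0,0,0]) P = 0 := by
        have h := diag P hdec hgD ![0,0,1,0,0,0]
        rw [Fin.prod_univ_six] at h
        norm_num [dvec, cv0, cv1, cv2, cv3, cv4, cv5] at h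
        linarith
      have hz8 : coeff (expo ![0,0,1,0,0,1]) P = 0 := by
        have h := diag P hdec hgD ![0,0,1,0,0,1]
        rw [Fin.prod_univ_six] at h
        norm_num [dvec, cv0, cv1, cv2, cv3, cv4, cv5] at h
        linarith
      have hz9 : coeff (expo ![0,0,1,0,1,0]) P = 0 := by
        have h := diag P hdec hgD ![0,0,1,0,1,0]
        rw [Fin.prod_univ_six] at h
        norm_num [dvec, cv0, cv1, cv2, cv3, cv4, cv5] at h
        linarith
      have hz10 : coeff (expo ![0,0,1,1,0,0]) P = 0 := by
        have h := diag P hdec hgD ![0,0,1,1,0,0]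
        rw [Fin.prod_univ_six] at h
        norm_num [dvec, cv0, cv1, cv2, cv3, cv4, cv5] at h
        linarith
      have hz11 : coeff (expo ![0,0,1,1,1,1]) P = 0 := by
        have h := diag P hdec hgD ![0,0,1,1,1,1]
        rw [Fin.prod_univ_six] at h
        norm_num [dvec, cv0, cv1, cv2, cv3, cv4, cv5] at h
        linarith
      have hz12 : coeff (expo ![0,1,0,0,0,0]) P = 0 := by
        have h := diag P hdec hgD ![0,1,0,0,0,0]
        rw [Fin.prod_univ_six] at h
        norm_num [dvec, cv0, cv1, cv2, cv3, cv4, cv5] at h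
        linarith
      have hz13 : coeff (expo ![0,1,0,0,0,1]) P = 0 := by
        have h := diag P hdec hgD ![0,1,0,0,0,1]
        rw [Fin.prod_univ_six] at h
        norm_num [dvec, cv0, cv1, cv2, cv3, cv4, cv5] at h
        linarith
      have hz14 : coeff (expo ![0,1,0,0,1,0]) P = 0 := by
        have h := diag P hdec hgD ![0,1,0,0,1,0]
        rw [Fin.prod_univ_six] at h
        norm_num [dvec, cv0, cv1, cv2, cv3, cv4, cv5] at h
        linarith
      have hz15 : coeff (expo ![0,1,0,1,0,0]) P = 0 := by
        have h := diag P hdec hgD ![0,1,0,1,0,0]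
        rw [Fin.prod_univ_six] at h
        norm_num [dvec, cv0, cv1, cv2, cv3, cv4, cv5] at h
        linarith
      have hz16 : coeff (expo ![0,1,0,1,1,1]) P = 0 := by
        have h := diag P hdec hgD ![0,1,0,1,1,1]
        rw [Fin.prod_univ_six] at h
        norm_num [dvec, cv0, cv1, cv2, cv3, cv4, cv5] at h
        linarith
      have hz17 : coeff (expo ![0,1,1,0,0,0]) P = 0 := by
        have h := diag P hdec hgD ![0,1,1,0,0,0]
        rw [Fin.prod_univ_six] at h
        norm_num [dvec, cv0, cv1, cv2, cv3, cv4, cv5] at h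
        linarith
      have hz18 : coeff (expo ![0,1,1,0,1,1]) P = 0 := by
        have h := diag P hdec hgD ![0,1,1,0,1,1]
        rw [Fin.prod_univ_six] at h
        norm_num [dvec, cv0, cv1, cv2, cv3, cv4, cv5] at h
        linarith
      have hz19 : coeff (expo ![0,1,1,1,0,1]) P = 0 := by
        have h := diag P hdec hgD ![0,1,1,1,0,1]
        rw [Fin.prod_univ_six] at h
        norm_num [dvec, cv0, cv1, cv2, cv3, cv4, cv5] at h
        linarith
      have hz20 : coeff (expo ![0,1,1,1,1,0]) P = 0 := by
        have h := diag P hdec hgD ![0,1,1,1,1,0]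
        rw [Fin.prod_univ_six] at h
        norm_num [dvec, cv0, cv1, cv2, cv3, cv4, cv5] at h
        linarith
      have hz21 : coeff (expo ![0,1,1,1,1,1]) P = 0 := by
        have h := diag P hdec hgD ![0,1,1,1,1,1]
        rw [Fin.prod_univ_six] at h
        norm_num [dvec, cv0, cv1, cv2, cv3, cv4, cv5] at h
        linarith
      have hz22 : coeff (expo ![1,0,0,0,0,0]) P = 0 := by
        have h := diag P hdec hgD ![1,0,0,0,0,0]
        rw [Fin.prod_univ_six] at h
        norm_num [dvec, cv0, cv1, cv2, cv3, cv4, cv5] at h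
        linarith
      have hz23 : coeff (expo ![1,0,0,0,0,1]) P = 0 := by
        have h := diag P hdec hgD ![1,0,0,0,0,1]
        rw [Fin.prod_univ_six] at h
        norm_num [dvec, cv0, cv1, cv2, cv3, cv4, cv5] at h
        linarith
      have hz24 : coeff (expo ![1,0,0,0,1,0]) P = 0 := by
        have h := diag P hdec hgD ![1,0,0,0,1,0]
        rw [Fin.prod_univ_six] at h
        norm_num [dvec, cv0, cv1, cv2, cv3, cv4, cv5] at h
        linarith
      have hz25 : coeff (expo ![1,0,0,1,0,0]) P = 0 := by
        have h := diag P hdec hgD ![1,0,0,1,0,0]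
        rw [Fin.prod_univ_six] at h
        norm_num [dvec, cv0, cv1, cv2, cv3, cv4, cv5] at h
        linarith
      have hz26 : coeff (expo ![1,0,0,1,1,1]) P = 0 := by
        have h := diag P hdec hgD ![1,0,0,1,1,1]
        rw [Fin.prod_univ_six] at h
        norm_num [dvec, cv0, cv1, cv2, cv3, cv4, cv5] at h
        linarith
      have hz27 : coeff (expo ![1,0,1,0,0,0]) P = 0 := by
        have h := diag P hdec hgD ![1,0,1,0,0,0]
        rw [Fin.prod_univ_six] at h
        norm_num [dvec, cv0, cv1, cv2, cv3, cv4, cv5] at h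
        linarith
      have hz28 : coeff (expo ![1,0,1,0,1,1]) P = 0 := by
        have h := diag P hdec hgD ![1,0,1,0,1,1]
        rw [Fin.prod_univ_six] at h
        norm_num [dvec, cv0, cv1, cv2, cv3, cv4, cv5] at h
        linarith
      have hz29 : coeff (expo ![1,0,1,1,0,1]) P = 0 := by
        have h := diag P hdec hgD ![1,0,1,1,0,1]
        rw [Fin.prod_univ_six] at h
        norm_num [dvec, cv0, cv1, cv2, cv3, cv4, cv5] at h
        linarith
      have hz30 : coeff (expo ![1,0,1,1,1,0]) P = 0 := by
        have h := diag P hdec hgD ![1,0,1,1,1,0]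
        rw [Fin.prod_univ_six] at h
        norm_num [dvec, cv0, cv1, cv2, cv3, cv4, cv5] at h
        linarith
      have hz31 : coeff (expo ![1,0,1,1,1,1]) P = 0 := by
        have h := diag P hdec hgD ![1,0,1,1,1,1]
        rw [Fin.prod_univ_six] at h
        norm_num [dvec, cv0, cv1, cv2, cv3, cv4, cv5] at h
        linarith
      have hz32 : coeff (expo ![1,1,0,0,0,0]) P = 0 := by
        have h := diag P hdec hgD ![1,1,0,0,0,0]
        rw [Fin.prod_univ_six] at h
        norm_num [dvec, cv0, cv1, cv2, cv3, cv4, cv5] at h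
        linarith
      have hz33 : coeff (expo ![1,1,0,0,1,1]) P = 0 := by
        have h := diag P hdec hgD ![1,1,0,0,1,1]
        rw [Fin.prod_univ_six] at h
        norm_num [dvec, cv0, cv1, cv2, cv3, cv4, cv5] at h
        linarith
      have hz34 : coeff (expo ![1,1,0,1,0,1]) P = 0 := by
        have h := diag P hdec hgD ![1,1,0,1,0,1]
        rw [Fin.prod_univ_six] at h
        norm_num [dvec, cv0, cv1, cv2, cv3, cv4, cv5] at h
        linarith
      have hz35 : coeff (expo ![1,1,0,1,1,0]) P = 0 := by
        have h := diag P hdec hgD ![1,1,0,1,1,0]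
        rw [Fin.prod_univ_six] at h
        norm_num [dvec, cv0, cv1, cv2, cv3, cv4, cv5] at h
        linarith
      have hz36 : coeff (expo ![1,1,0,1,1,1]) P = 0 := by
        have h := diag P hdec hgD ![1,1,0,1,1,1]
        rw [Fin.prod_univ_six] at h
        norm_num [dvec, cv0, cv1, cv2, cv3, cv4, cv5] at h
        linarith
      have hz37 : coeff (expo ![1,1,1,0,0,1]) P = 0 := by
        have h := diag P hdec hgD ![1,1,1,0,0,1]
        rw [Fin.prod_univ_six] at h
        norm_num [dvec, cv0, cv1, cv2, cv3, cv4, cv5] at h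
        linarith
      have hz38 : coeff (expo ![1,1,1,0,1,0]) P = 0 := by
        have h := diag P hdec hgD ![1,1,1,0,1,0]
        rw [Fin.prod_univ_six] at h
        norm_num [dvec, cv0, cv1, cv2, cv3, cv4, cv5] at h
        linarith
      have hz39 : coeff (expo ![1,1,1,0,1,1]) P = 0 := by
        have h := diag P hdec hgD ![1,1,1,0,1,1]
        rw [Fin.prod_univ_six] at h
        norm_num [dvec, cv0, cv1, cv2, cv3, cv4, cv5] at h
        linarith
      have hz40 : coeff (expo ![1,1,1,1,0,0]) P = 0 := by
        have h := diag P hdec hgD ![1,1,1,1,0,0]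
        rw [Fin.prod_univ_six] at h
        norm_num [dvec, cv0, cv1, cv2, cv3, cv4, cv5] at h
        linarith
      have hz41 : coeff (expo ![1,1,1,1,0,1]) P = 0 := by
        have h := diag P hdec hgD ![1,1,1,1,0,1]
        rw [Fin.prod_univ_six] at h
        norm_num [dvec, cv0, cv1, cv2, cv3, cv4, cv5] at h
        linarith
      have hz42 : coeff (expo ![1,1,1,1,1,0]) P = 0 := by
        have h := diag P hdec hgD ![1,1,1,1,1,0]
        rw [Fin.prod_univ_six] at h
        norm_num [dvec, cv0, cv1, cv2, cv3, cv4, cv5] at h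
        linarith
      have hz43 : coeff (expo ![1,1,1,1,1,1]) P = 0 := by
        have h := diag P hdec hgD ![1,1,1,1,1,1]
        rw [Fin.prod_univ_six] at h
        norm_num [dvec, cv0, cv1, cv2, cv3, cv4, cv5] at h
        linarith
      have hgU : aeval (fun p : Fin 6 × Fin 2 =>
          ∑ j : Fin 2, C ((!![(1:ℚ),1;0,1]) j p.2) * X (p.1, j)) P = P :=
        hSL ⟨!![(1:ℚ),1;0,1], by norm_num [Matrix.det_fin_two_of]⟩
      have hgL : aeval (fun p : Fin 6 × Fin 2 =>
          ∑ j : Fin 2, C ((!![(1:ℚ),0;1,1]) j p.2) * X (p.1, j)) P = P :=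
        hSL ⟨!![(1:ℚ),0;1,1], by norm_num [Matrix.det_fin_two_of]⟩
      have hu0 : _ := key P hdec !![(1:ℚ),1;0,1] hgU ![0,0,0,0,1,1]
      rw [sum_fun6] at hu0
      simp only [Fin.sum_univ_two, Fin.prod_univ_six, cv0, cv1, cv2, cv3, cv4, cv5,
        mA00, mA01, mA10, mA11] at hu0
      norm_num at hu0
      have hu1 : _ := key P hdec !![(1:ℚ),1;0,1] hgU ![0,0,0,1,0,1]
      rw [sum_fun6] at hu1
      simp only [Fin.sum_univ_two, Fin.prod_univ_six, cv0, cv1, cv2, cv3, cv4, cv5,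
        mA00, mA01, mA10, mA11] at hu1
      norm_num at hu1
      have hu2 : _ := key P hdec !![(1:ℚ),1;0,1] hgU ![0,0,0,1,1,0]
      rw [sum_fun6] at hu2
      simp only [Fin.sum_univ_two, Fin.prod_univ_six, cv0, cv1, cv2, cv3, cv4, cv5,
        mA00, mA01, mA10, mA11] at hu2
      norm_num at hu2
      have hu3 : _ := key P hdec !![(1:ℚ),1;0,1] hgU ![0,0,1,0,0,1]
      rw [sum_fun6] at hu3
      simp only [Fin.sum_univ_two, Fin.prod_univ_six, cv0, cv1, cv2, cv3, cv4, cv5,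
        mA00, mA01, mA10, mA11] at hu3
      norm_num at hu3
      have hu4 : _ := key P hdec !![(1:ℚ),1;0,1] hgU ![0,0,1,0,1,0]
      rw [sum_fun6] at hu4
      simp only [Fin.sum_univ_two, Fin.prod_univ_six, cv0, cv1, cv2, cv3, cv4, cv5,
        mA00, mA01, mA10, mA11] at hu4
      norm_num at hu4
      have hu5 : _ := key P hdec !![(1:ℚ),1;0,1] hgU ![0,0,1,1,0,0]
      rw [sum_fun6] at hu5
      simp only [Fin.sum_univ_two, Fin.prod_univ_six, cv0, cv1, cv2, cv3, cv4, cv5,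
        mA00, mA01, mA10, mA11] at hu5
      norm_num at hu5
      have hu6 : _ := key P hdec !![(1:ℚ),1;0,1] hgU ![0,1,0,0,0,1]
      rw [sum_fun6] at hu6
      simp only [Fin.sum_univ_two, Fin.prod_univ_six, cv0, cv1, cv2, cv3, cv4, cv5,
        mA00, mA01, mA10, mA11] at hu6
      norm_num at hu6
      have hu7 : _ := key P hdec !![(1:ℚ),1;0,1] hgU ![0,1,0,0,1,0]
      rw [sum_fun6] at hu7
      simp only [Fin.sum_univ_two, Fin.prod_univ_six, cv0, cv1, cv2, cv3, cv4, cv5,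
        mA00, mA01, mA10, mA11] at hu7
      norm_num at hu7
      have hu8 : _ := key P hdec !![(1:ℚ),1;0,1] hgU ![0,1,0,1,0,0]
      rw [sum_fun6] at hu8
      simp only [Fin.sum_univ_two, Fin.prod_univ_six, cv0, cv1, cv2, cv3, cv4, cv5,
        mA00, mA01, mA10, mA11] at hu8
      norm_num at hu8
      have hu9 : _ := key P hdec !![(1:ℚ),1;0,1] hgU ![0,1,1,0,0,0]
      rw [sum_fun6] at hu9
      simp only [Fin.sum_univ_two, Fin.prod_univ_six, cv0, cv1, cv2, cv3, cv4, cv5,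
        mA00, mA01, mA10, mA11] at hu9
      norm_num at hu9
      have hu10 : _ := key P hdec !![(1:ℚ),1;0,1] hgU ![1,0,0,0,0,1]
      rw [sum_fun6] at hu10
      simp only [Fin.sum_univ_two, Fin.prod_univ_six, cv0, cv1, cv2, cv3, cv4, cv5,
        mA00, mA01, mA10, mA11] at hu10
      norm_num at hu10
      have hu11 : _ := key P hdec !![(1:ℚ),1;0,1] hgU ![1,0,0,0,1,0]
      rw [sum_fun6] at hu11
      simp only [Fin.sum_univ_two, Fin.prod_univ_six, cv0, cv1, cv2, cv3, cv4, cv5,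
        mA00, mA01, mA10, mA11] at hu11
      norm_num at hu11
      have hu12 : _ := key P hdec !![(1:ℚ),1;0,1] hgU ![1,0,0,1,0,0]
      rw [sum_fun6] at hu12
      simp only [Fin.sum_univ_two, Fin.prod_univ_six, cv0, cv1, cv2, cv3, cv4, cv5,
        mA00, mA01, mA10, mA11] at hu12
      norm_num at hu12
      have hu13 : _ := key P hdec !![(1:ℚ),1;0,1] hgU ![1,0,1,0,0,0]
      rw [sum_fun6] at hu13
      simp only [Fin.sum_univ_two, Fin.prod_univ_six, cv0, cv1, cv2, cv3, cv4, cv5,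
        mA00, mA01, mA10, mA11] at hu13
      norm_num at hu13
      have hu14 : _ := key P hdec !![(1:ℚ),1;0,1] hgU ![1,1,0,0,0,0]
      rw [sum_fun6] at hu14
      simp only [Fin.sum_univ_two, Fin.prod_univ_six, cv0, cv1, cv2, cv3, cv4, cv5,
        mA00, mA01, mA10, mA11] at hu14
      norm_num at hu14
      have hl0 : _ := key P hdec !![(1:ℚ),0;1,1] hgL ![0,0,1,1,1,1]
      rw [sum_fun6] at hl0
      simp only [Fin.sum_univ_two, Fin.prod_univ_six, cv0, cv1, cv2, cv3, cv4, cv5,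
        mA00, mA01, mA10, mA11] at hl0
      norm_num at hl0
      have hl1 : _ := key P hdec !![(1:ℚ),0;1,1] hgL ![0,1,0,1,1,1]
      rw [sum_fun6] at hl1
      simp only [Fin.sum_univ_two, Fin.prod_univ_six, cv0, cv1, cv2, cv3, cv4, cv5,
        mA00, mA01, mA10, mA11] at hl1
      norm_num at hl1
      have hl2 : _ := key P hdec !![(1:ℚ),0;1,1] hgL ![0,1,1,0,1,1]
      rw [sum_fun6] at hl2
      simp only [Fin.sum_univ_two, Fin.prod_univ_six, cv0, cv1, cv2, cv3, cv4, cv5,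
        mA00, mA01, mA10, mA11] at hl2
      norm_num at hl2
      have hl3 : _ := key P hdec !![(1:ℚ),0;1,1] hgL ![0,1,1,1,0,1]
      rw [sum_fun6] at hl3
      simp only [Fin.sum_univ_two, Fin.prod_univ_six, cv0, cv1, cv2, cv3, cv4, cv5,
        mA00, mA01, mA10, mA11] at hl3
      norm_num at hl3
      have hl4 : _ := key P hdec !![(1:ℚ),0;1,1] hgL ![0,1,1,1,1,0]
      rw [sum_fun6] at hl4
      simp only [Fin.sum_univ_two, Fin.prod_univ_six, cv0, cv1, cv2, cv3, cv4, cv5,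
        mA00, mA01, mA10, mA11] at hl4
      norm_num at hl4
      have hl5 : _ := key P hdec !![(1:ℚ),0;1,1] hgL ![1,0,0,1,1,1]
      rw [sum_fun6] at hl5
      simp only [Fin.sum_univ_two, Fin.prod_univ_six, cv0, cv1, cv2, cv3, cv4, cv5,
        mA00, mA01, mA10, mA11] at hl5
      norm_num at hl5
      have hl6 : _ := key P hdec !![(1:ℚ),0;1,1] hgL ![1,0,1,0,1,1]
      rw [sum_fun6] at hl6
      simp only [Fin.sum_univ_two, Fin.prod_univ_six, cv0, cv1, cv2, cv3, cv4, cv5,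
        mA00, mA01, mA10, mA11] at hl6
      norm_num at hl6
      have hl7 : _ := key P hdec !![(1:ℚ),0;1,1] hgL ![1,0,1,1,0,1]
      rw [sum_fun6] at hl7
      simp only [Fin.sum_univ_two, Fin.prod_univ_six, cv0, cv1, cv2, cv3, cv4, cv5,
        mA00, mA01, mA10, mA11] at hl7
      norm_num at hl7
      have hl8 : _ := key P hdec !![(1:ℚ),0;1,1] hgL ![1,0,1,1,1,0]
      rw [sum_fun6] at hl8
      simp only [Fin.sum_univ_two, Fin.prod_univ_six, cv0, cv1, cv2, cv3, cv4, cv5,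
        mA00, mA01, mA10, mA11] at hl8
      norm_num at hl8
      have hl9 : _ := key P hdec !![(1:ℚ),0;1,1] hgL ![1,1,0,0,1,1]
      rw [sum_fun6] at hl9
      simp only [Fin.sum_univ_two, Fin.prod_univ_six, cv0, cv1, cv2, cv3, cv4, cv5,
        mA00, mA01, mA10, mA11] at hl9
      norm_num at hl9
      have hl10 : _ := key P hdec !![(1:ℚ),0;1,1] hgL ![1,1,0,1,0,1]
      rw [sum_fun6] at hl10
      simp only [Fin.sum_univ_two, Fin.prod_univ_six, cv0, cv1, cv2, cv3, cv4, cv5,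
        mA00, mA01, mA10, mA11] at hl10
      norm_num at hl10
      have hl11 : _ := key P hdec !![(1:ℚ),0;1,1] hgL ![1,1,0,1,1,0]
      rw [sum_fun6] at hl11
      simp only [Fin.sum_univ_two, Fin.prod_univ_six, cv0, cv1, cv2, cv3, cv4, cv5,
        mA00, mA01, mA10, mA11] at hl11
      norm_num at hl11
      have hl12 : _ := key P hdec !![(1:ℚ),0;1,1] hgL ![1,1,1,0,0,1]
      rw [sum_fun6] at hl12
      simp only [Fin.sum_univ_two, Fin.prod_univ_six, cv0, cv1, cv2, cv3, cv4, cv5,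
        mA00, mA01, mA10, mA11] at hl12
      norm_num at hl12
      have hl13 : _ := key P hdec !![(1:ℚ),0;1,1] hgL ![1,1,1,0,1,0]
      rw [sum_fun6] at hl13
      simp only [Fin.sum_univ_two, Fin.prod_univ_six, cv0, cv1, cv2, cv3, cv4, cv5,
        mA00, mA01, mA10, mA11] at hl13
      norm_num at hl13
      have hl14 : _ := key P hdec !![(1:ℚ),0;1,1] hgL ![1,1,1,1,0,0]
      rw [sum_fun6] at hl14
      simp only [Fin.sum_univ_two, Fin.prod_univ_six, cv0, cv1, cv2, cv3, cv4, cv5,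
        mA00, mA01, mA10, mA11] at hl14
      norm_num at hl14
      have hJ2 : coeff (expo ![0,0,1,1,0,1]) P = coeff (expo ![0,0,1,1,1,0]) P := by
        have h := exch P (Equiv.swap 0 1 * Equiv.swap 4 5) ![0,0,1,1,0,1] ![0,0,1,1,1,0] (by decide)
        rwa [hJ] at h
      have hJ3 : coeff (expo ![0,0,1,1,1,0]) P = coeff (expo ![0,0,1,1,0,1]) P := by
        have h := exch P (Equiv.swap 0 1 * Equiv.swap 4 5) ![0,0,1,1,1,0] ![0,0,1,1,0,1] (by decide)
        rwa [hJ] at h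
      have hJ4 : coeff (expo ![0,1,0,0,1,1]) P = coeff (expo ![1,0,0,0,1,1]) P := by
        have h := exch P (Equiv.swap 0 1 * Equiv.swap 4 5) ![0,1,0,0,1,1] ![1,0,0,0,1,1] (by decide)
        rwa [hJ] at h
      have hJ5 : coeff (expo ![0,1,0,1,0,1]) P = coeff (expo ![1,0,0,1,1,0]) P := by
        have h := exch P (Equiv.swap 0 1 * Equiv.swap 4 5) ![0,1,0,1,0,1] ![1,0,0,1,1,0] (by decide)
        rwa [hJ] at h
      have hJ6 : coeff (expo ![0,1,0,1,1,0]) P = coeff (expo ![1,0,0,1,0,1]) P := by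
        have h := exch P (Equiv.swap 0 1 * Equiv.swap 4 5) ![0,1,0,1,1,0] ![1,0,0,1,0,1] (by decide)
        rwa [hJ] at h
      have hJ7 : coeff (expo ![0,1,1,0,0,1]) P = coeff (expo ![1,0,1,0,1,0]) P := by
        have h := exch P (Equiv.swap 0 1 * Equiv.swap 4 5) ![0,1,1,0,0,1] ![1,0,1,0,1,0] (by decide)
        rwa [hJ] at h
      have hJ8 : coeff (expo ![0,1,1,0,1,0]) P = coeff (expo ![1,0,1,0,0,1]) P := by
        have h := exch P (Equiv.swap 0 1 * Equiv.swap 4 5) ![0,1,1,0,1,0] ![1,0,1,0,0,1] (by decide)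
        rwa [hJ] at h
      have hJ9 : coeff (expo ![0,1,1,1,0,0]) P = coeff (expo ![1,0,1,1,0,0]) P := by
        have h := exch P (Equiv.swap 0 1 * Equiv.swap 4 5) ![0,1,1,1,0,0] ![1,0,1,1,0,0] (by decide)
        rwa [hJ] at h
      have hJ10 : coeff (expo ![1,0,0,0,1,1]) P = coeff (expo ![0,1,0,0,1,1]) P := by
        have h := exch P (Equiv.swap 0 1 * Equiv.swap 4 5) ![1,0,0,0,1,1] ![0,1,0,0,1,1] (by decide)
        rwa [hJ] at h
      have hJ11 : coeff (expo ![1,0,0,1,0,1]) P = coeff (expo ![0,1,0,1,1,0]) P := by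
        have h := exch P (Equiv.swap 0 1 * Equiv.swap 4 5) ![1,0,0,1,0,1] ![0,1,0,1,1,0] (by decide)
        rwa [hJ] at h
      have hJ12 : coeff (expo ![1,0,0,1,1,0]) P = coeff (expo ![0,1,0,1,0,1]) P := by
        have h := exch P (Equiv.swap 0 1 * Equiv.swap 4 5) ![1,0,0,1,1,0] ![0,1,0,1,0,1] (by decide)
        rwa [hJ] at h
      have hJ13 : coeff (expo ![1,0,1,0,0,1]) P = coeff (expo ![0,1,1,0,1,0]) P := by
        have h := exch P (Equiv.swap 0 1 * Equiv.swap 4 5) ![1,0,1,0,0,1] ![0,1,1,0,1,0] (by decide)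
        rwa [hJ] at h
      have hJ14 : coeff (expo ![1,0,1,0,1,0]) P = coeff (expo ![0,1,1,0,0,1]) P := by
        have h := exch P (Equiv.swap 0 1 * Equiv.swap 4 5) ![1,0,1,0,1,0] ![0,1,1,0,0,1] (by decide)
        rwa [hJ] at h
      have hJ15 : coeff (expo ![1,0,1,1,0,0]) P = coeff (expo ![0,1,1,1,0,0]) P := by
        have h := exch P (Equiv.swap 0 1 * Equiv.swap 4 5) ![1,0,1,1,0,0] ![0,1,1,1,0,0] (by decide)
        rwa [hJ] at h
      have hJ16 : coeff (expo ![1,1,0,0,0,1]) P = coeff (expo ![1,1,0,0,1,0]) P := by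
        have h := exch P (Equiv.swap 0 1 * Equiv.swap 4 5) ![1,1,0,0,0,1] ![1,1,0,0,1,0] (by decide)
        rwa [hJ] at h
      have hJ17 : coeff (expo ![1,1,0,0,1,0]) P = coeff (expo ![1,1,0,0,0,1]) P := by
        have h := exch P (Equiv.swap 0 1 * Equiv.swap 4 5) ![1,1,0,0,1,0] ![1,1,0,0,0,1] (by decide)
        rwa [hJ] at h
      have hK1 : coeff (expo ![0,0,1,0,1,1]) P = coeff (expo ![0,1,0,1,1,0]) P := by
        have h := exch P (Equiv.swap 1 2 * Equiv.swap 5 3) ![0,0,1,0,1,1] ![0,1,0,1,1,0] (by decide)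
        rwa [hK] at h
      have hK2 : coeff (expo ![0,0,1,1,0,1]) P = coeff (expo ![0,1,0,1,0,1]) P := by
        have h := exch P (Equiv.swap 1 2 * Equiv.swap 5 3) ![0,0,1,1,0,1] ![0,1,0,1,0,1] (by decide)
        rwa [hK] at h
      have hK3 : coeff (expo ![0,0,1,1,1,0]) P = coeff (expo ![0,1,0,0,1,1]) P := by
        have h := exch P (Equiv.swap 1 2 * Equiv.swap 5 3) ![0,0,1,1,1,0] ![0,1,0,0,1,1] (by decide)
        rwa [hK] at h
      have hK4 : coeff (expo ![0,1,0,0,1,1]) P = coeff (expo ![0,0,1,1,1,0]) P := by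
        have h := exch P (Equiv.swap 1 2 * Equiv.swap 5 3) ![0,1,0,0,1,1] ![0,0,1,1,1,0] (by decide)
        rwa [hK] at h
      have hK5 : coeff (expo ![0,1,0,1,0,1]) P = coeff (expo ![0,0,1,1,0,1]) P := by
        have h := exch P (Equiv.swap 1 2 * Equiv.swap 5 3) ![0,1,0,1,0,1] ![0,0,1,1,0,1] (by decide)
        rwa [hK] at h
      have hK6 : coeff (expo ![0,1,0,1,1,0]) P = coeff (expo ![0,0,1,0,1,1]) P := by
        have h := exch P (Equiv.swap 1 2 * Equiv.swap 5 3) ![0,1,0,1,1,0] ![0,0,1,0,1,1] (by decide)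
        rwa [hK] at h
      have hK7 : coeff (expo ![0,1,1,0,0,1]) P = coeff (expo ![0,1,1,1,0,0]) P := by
        have h := exch P (Equiv.swap 1 2 * Equiv.swap 5 3) ![0,1,1,0,0,1] ![0,1,1,1,0,0] (by decide)
        rwa [hK] at h
      have hK9 : coeff (expo ![0,1,1,1,0,0]) P = coeff (expo ![0,1,1,0,0,1]) P := by
        have h := exch P (Equiv.swap 1 2 * Equiv.swap 5 3) ![0,1,1,1,0,0] ![0,1,1,0,0,1] (by decide)
        rwa [hK] at h
      have hK10 : coeff (expo ![1,0,0,0,1,1]) P = coeff (expo ![1,0,0,1,1,0]) P := by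
        have h := exch P (Equiv.swap 1 2 * Equiv.swap 5 3) ![1,0,0,0,1,1] ![1,0,0,1,1,0] (by decide)
        rwa [hK] at h
      have hK12 : coeff (expo ![1,0,0,1,1,0]) P = coeff (expo ![1,0,0,0,1,1]) P := by
        have h := exch P (Equiv.swap 1 2 * Equiv.swap 5 3) ![1,0,0,1,1,0] ![1,0,0,0,1,1] (by decide)
        rwa [hK] at h
      have hK13 : coeff (expo ![1,0,1,0,0,1]) P = coeff (expo ![1,1,0,1,0,0]) P := by
        have h := exch P (Equiv.swap 1 2 * Equiv.swap 5 3) ![1,0,1,0,0,1] ![1,1,0,1,0,0] (by decide)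
        rwa [hK] at h
      have hK14 : coeff (expo ![1,0,1,0,1,0]) P = coeff (expo ![1,1,0,0,1,0]) P := by
        have h := exch P (Equiv.swap 1 2 * Equiv.swap 5 3) ![1,0,1,0,1,0] ![1,1,0,0,1,0] (by decide)
        rwa [hK] at h
      have hK15 : coeff (expo ![1,0,1,1,0,0]) P = coeff (expo ![1,1,0,0,0,1]) P := by
        have h := exch P (Equiv.swap 1 2 * Equiv.swap 5 3) ![1,0,1,1,0,0] ![1,1,0,0,0,1] (by decide)
        rwa [hK] at h
      have hK16 : coeff (expo ![1,1,0,0,0,1]) P = coeff (expo ![1,0,1,1,0,0]) P := by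
        have h := exch P (Equiv.swap 1 2 * Equiv.swap 5 3) ![1,1,0,0,0,1] ![1,0,1,1,0,0] (by decide)
        rwa [hK] at h
      have hK17 : coeff (expo ![1,1,0,0,1,0]) P = coeff (expo ![1,0,1,0,1,0]) P := by
        have h := exch P (Equiv.swap 1 2 * Equiv.swap 5 3) ![1,1,0,0,1,0] ![1,0,1,0,1,0] (by decide)
        rwa [hK] at h
      have hK18 : coeff (expo ![1,1,0,1,0,0]) P = coeff (expo ![1,0,1,0,0,1]) P := by
        have h := exch P (Equiv.swap 1 2 * Equiv.swap 5 3) ![1,1,0,1,0,0] ![1,0,1,0,0,1] (by decide)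
        rwa [hK] at h
      have hL0 : -coeff (expo ![0,0,0,1,1,1]) P = coeff (expo ![1,1,1,0,0,0]) P := by
        have h := exch P (Equiv.swap 0 4 * Equiv.swap 1 5 * Equiv.swap 2 3) ![0,0,0,1,1,1] ![1,1,1,0,0,0] (by decide)
        rwa [hL, coeff_neg] at h
      have hL1 : -coeff (expo ![0,0,1,0,1,1]) P = coeff (expo ![1,1,0,1,0,0]) P := by
        have h := exch P (Equiv.swap 0 4 * Equiv.swap 1 5 * Equiv.swap 2 3) ![0,0,1,0,1,1] ![1,1,0,1,0,0] (by decide)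
        rwa [hL, coeff_neg] at h
      have hL2 : -coeff (expo ![0,0,1,1,0,1]) P = coeff (expo ![0,1,1,1,0,0]) P := by
        have h := exch P (Equiv.swap 0 4 * Equiv.swap 1 5 * Equiv.swap 2 3) ![0,0,1,1,0,1] ![0,1,1,1,0,0] (by decide)
        rwa [hL, coeff_neg] at h
      have hL3 : -coeff (expo ![0,0,1,1,1,0]) P = coeff (expo ![1,0,1,1,0,0]) P := by
        have h := exch P (Equiv.swap 0 4 * Equiv.swap 1 5 * Equiv.swap 2 3) ![0,0,1,1,1,0] ![1,0,1,1,0,0] (by decide)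
        rwa [hL, coeff_neg] at h
      have hL4 : -coeff (expo ![0,1,0,0,1,1]) P = coeff (expo ![1,1,0,0,0,1]) P := by
        have h := exch P (Equiv.swap 0 4 * Equiv.swap 1 5 * Equiv.swap 2 3) ![0,1,0,0,1,1] ![1,1,0,0,0,1] (by decide)
        rwa [hL, coeff_neg] at h
      have hL5 : -coeff (expo ![0,1,0,1,0,1]) P = coeff (expo ![0,1,1,0,0,1]) P := by
        have h := exch P (Equiv.swap 0 4 * Equiv.swap 1 5 * Equiv.swap 2 3) ![0,1,0,1,0,1] ![0,1,1,0,0,1] (by decide)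
        rwa [hL, coeff_neg] at h
      have hL6 : -coeff (expo ![0,1,0,1,1,0]) P = coeff (expo ![1,0,1,0,0,1]) P := by
        have h := exch P (Equiv.swap 0 4 * Equiv.swap 1 5 * Equiv.swap 2 3) ![0,1,0,1,1,0] ![1,0,1,0,0,1] (by decide)
        rwa [hL, coeff_neg] at h
      have hL7 : -coeff (expo ![0,1,1,0,0,1]) P = coeff (expo ![0,1,0,1,0,1]) P := by
        have h := exch P (Equiv.swap 0 4 * Equiv.swap 1 5 * Equiv.swap 2 3) ![0,1,1,0,0,1] ![0,1,0,1,0,1] (by decide)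
        rwa [hL, coeff_neg] at h
      have hL8 : -coeff (expo ![0,1,1,0,1,0]) P = coeff (expo ![1,0,0,1,0,1]) P := by
        have h := exch P (Equiv.swap 0 4 * Equiv.swap 1 5 * Equiv.swap 2 3) ![0,1,1,0,1,0] ![1,0,0,1,0,1] (by decide)
        rwa [hL, coeff_neg] at h
      have hL9 : -coeff (expo ![0,1,1,1,0,0]) P = coeff (expo ![0,0,1,1,0,1]) P := by
        have h := exch P (Equiv.swap 0 4 * Equiv.swap 1 5 * Equiv.swap 2 3) ![0,1,1,1,0,0] ![0,0,1,1,0,1] (by decide)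
        rwa [hL, coeff_neg] at h
      have hL10 : -coeff (expo ![1,0,0,0,1,1]) P = coeff (expo ![1,1,0,0,1,0]) P := by
        have h := exch P (Equiv.swap 0 4 * Equiv.swap 1 5 * Equiv.swap 2 3) ![1,0,0,0,1,1] ![1,1,0,0,1,0] (by decide)
        rwa [hL, coeff_neg] at h
      have hL11 : -coeff (expo ![1,0,0,1,0,1]) P = coeff (expo ![0,1,1,0,1,0]) P := by
        have h := exch P (Equiv.swap 0 4 * Equiv.swap 1 5 * Equiv.swap 2 3) ![1,0,0,1,0,1] ![0,1,1,0,1,0] (by decide)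
        rwa [hL, coeff_neg] at h
      have hL12 : -coeff (expo ![1,0,0,1,1,0]) P = coeff (expo ![1,0,1,0,1,0]) P := by
        have h := exch P (Equiv.swap 0 4 * Equiv.swap 1 5 * Equiv.swap 2 3) ![1,0,0,1,1,0] ![1,0,1,0,1,0] (by decide)
        rwa [hL, coeff_neg] at h
      have hL13 : -coeff (expo ![1,0,1,0,0,1]) P = coeff (expo ![0,1,0,1,1,0]) P := by
        have h := exch P (Equiv.swap 0 4 * Equiv.swap 1 5 * Equiv.swap 2 3) ![1,0,1,0,0,1] ![0,1,0,1,1,0] (by decide)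
        rwa [hL, coeff_neg] at h
      have hL14 : -coeff (expo ![1,0,1,0,1,0]) P = coeff (expo ![1,0,0,1,1,0]) P := by
        have h := exch P (Equiv.swap 0 4 * Equiv.swap 1 5 * Equiv.swap 2 3) ![1,0,1,0,1,0] ![1,0,0,1,1,0] (by decide)
        rwa [hL, coeff_neg] at h
      have hL15 : -coeff (expo ![1,0,1,1,0,0]) P = coeff (expo ![0,0,1,1,1,0]) P := by
        have h := exch P (Equiv.swap 0 4 * Equiv.swap 1 5 * Equiv.swap 2 3) ![1,0,1,1,0,0] ![0,0,1,1,1,0] (by decide)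
        rwa [hL, coeff_neg] at h
      have hL16 : -coeff (expo ![1,1,0,0,0,1]) P = coeff (expo ![0,1,0,0,1,1]) P := by
        have h := exch P (Equiv.swap 0 4 * Equiv.swap 1 5 * Equiv.swap 2 3) ![1,1,0,0,0,1] ![0,1,0,0,1,1] (by decide)
        rwa [hL, coeff_neg] at h
      have hL17 : -coeff (expo ![1,1,0,0,1,0]) P = coeff (expo ![1,0,0,0,1,1]) P := by
        have h := exch P (Equiv.swap 0 4 * Equiv.swap 1 5 * Equiv.swap 2 3) ![1,1,0,0,1,0] ![1,0,0,0,1,1] (by decide)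
        rwa [hL, coeff_neg] at h
      have hL18 : -coeff (expo ![1,1,0,1,0,0]) P = coeff (expo ![0,0,1,0,1,1]) P := by
        have h := exch P (Equiv.swap 0 4 * Equiv.swap 1 5 * Equiv.swap 2 3) ![1,1,0,1,0,0] ![0,0,1,0,1,1] (by decide)
        rwa [hL, coeff_neg] at h
      have hL19 : -coeff (expo ![1,1,1,0,0,0]) P = coeff (expo ![0,0,0,1,1,1]) P := by
        have h := exch P (Equiv.swap 0 4 * Equiv.swap 1 5 * Equiv.swap 2 3) ![1,1,1,0,0,0] ![0,0,0,1,1,1] (by decide)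
        rwa [hL, coeff_neg] at h
      have hv11 : coeff (expo ![0,0,1,0,1,1]) P = (-2 : ℚ) * coeff (expo ![0,0,1,1,0,1]) P + (-1 : ℚ) * coeff (expo ![0,0,0,1,1,1]) P := by
        linear_combination (-2 : ℚ) * hz11 + ((-1 : ℚ)/2) * hz16 + ((-1 : ℚ)/2) * hz18 + ((-1 : ℚ)/2) * hz19 + ((-1 : ℚ)/2) * hz20 + ((-4 : ℚ)/3) * hz21 + ((-1 : ℚ)/2) * hz26 + ((-1 : ℚ)/2) * hz28 + ((-1 : ℚ)/2) * hz29 + ((-1 : ℚ)/2) * hz30 + ((-4 : ℚ)/3) * hz31 + ((-1 : ℚ)/3) * hz36 + ((-1 : ℚ)/3) * hz39 + ((-1 : ℚ)/3) * hz41 + ((-1 : ℚ)/3) * hz42 + (-1 : ℚ) * hz43 + ((1 : ℚ)/3) * hu0 + ((1 : ℚ)/3) * hu1 + ((1 : ℚ)/3) * hu2 + ((1 : ℚ)/3) * hu3 + ((1 : ℚ)/3) * hu4 + ((1 : ℚ)/3) * hu5 + ((-1 : ℚ)/6) * hu6 + ((-1 : ℚ)/6) * hu7 + ((-1 : ℚ)/6)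 * hu8 + ((-1 : ℚ)/6) * hu9 + ((-1 : ℚ)/6) * hu10 + ((-1 : ℚ)/6) * hu11 + ((-1 : ℚ)/6) * hu12 + ((-1 : ℚ)/6) * hu13 + ((1 : ℚ)/3) * hu14 + (1 : ℚ) * hJ2
      have hv14 : coeff (expo ![0,0,1,1,1,0]) P = (1 : ℚ) * coeff (expo ![0,0,1,1,0,1]) P + (0 : ℚ) * coeff (expo ![0,0,0,1,1,1]) P := by
        linear_combination (-1 : ℚ) * hJ2
      have hv19 : coeff (expo ![0,1,0,0,1,1]) P = (1 : ℚ) * coeff (expo ![0,0,1,1,0,1]) P + (0 : ℚ) * coeff (expo ![0,0,0,1,1,1]) P := by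
        linear_combination ((1 : ℚ)/2) * hz11 + ((-1 : ℚ)/4) * hz16 + ((-1 : ℚ)/4) * hz18 + ((1 : ℚ)/4) * hz19 + ((1 : ℚ)/4) * hz20 + ((1 : ℚ)/6) * hz21 + ((-1 : ℚ)/4) * hz26 + ((-1 : ℚ)/4) * hz28 + ((1 : ℚ)/4) * hz29 + ((1 : ℚ)/4) * hz30 + ((1 : ℚ)/6) * hz31 + ((-1 : ℚ)/2) * hz33 + ((-1 : ℚ)/3) * hz36 + ((-1 : ℚ)/3) * hz39 + ((1 : ℚ)/6) * hz41 + ((1 : ℚ)/6) * hz42 + ((1 : ℚ)/3) * hu0 + ((-1 : ℚ)/6) * hu1 + ((-1 : ℚ)/6) * hu2 + ((-1 : ℚ)/6) * hu3 + ((-1 : ℚ)/6) * hu4 + ((-1 : ℚ)/6) * hu5 + ((1 : ℚ)/12) * hu6 + ((1 : ℚ)/12) * hu7 + ((1 : ℚ)/12) * hu8 + ((1 : ℚ)/12) * hu9 + ((1 : ℚ)/12) * hu10 + ((1 : ℚ)/12) * hu11 + ((1 : ℚ)/12) * hu12 + ((1 : ℚ)/12) * hu13 + ((-1 : ℚ)/6)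 * hu14 + ((-1 : ℚ)/2) * hJ2 + ((1 : ℚ)/2) * hJ4
      have hv21 : coeff (expo ![0,1,0,1,0,1]) P = (1 : ℚ) * coeff (expo ![0,0,1,1,0,1]) P + (0 : ℚ) * coeff (expo ![0,0,0,1,1,1]) P := by
        linear_combination (1 : ℚ) * hz11 + ((-5 : ℚ)/4) * hz16 + ((1 : ℚ)/4) * hz18 + ((-1 : ℚ)/4) * hz19 + ((-1 : ℚ)/4) * hz20 + ((-1 : ℚ)/6) * hz21 + ((1 : ℚ)/4) * hz26 + ((3 : ℚ)/4) * hz28 + ((1 : ℚ)/4) * hz29 + ((1 : ℚ)/4) * hz30 + ((5 : ℚ)/6) * hz31 + ((-1 : ℚ)/2) * hz34 + ((-1 : ℚ)/2) * hz35 + ((-2 : ℚ)/3) * hz36 + ((1 : ℚ)/3) * hz39 + ((-1 : ℚ)/6) * hz41 + ((-1 : ℚ)/6) * hz42 + ((-1 : ℚ)/3) * hu0 + ((1 : ℚ)/6) * hu1 + ((1 : ℚ)/6) * hu2 + ((-1 : ℚ)/3) * hu3 + ((-1 : ℚ)/3) * hu4 + ((-1 : ℚ)/3) * hu5 + ((5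 : ℚ)/12) * hu6 + ((5 : ℚ)/12) * hu7 + ((5 : ℚ)/12) * hu8 + ((-1 : ℚ)/12) * hu9 + ((-1 : ℚ)/12) * hu10 + ((-1 : ℚ)/12) * hu11 + ((-1 : ℚ)/12) * hu12 + ((5 : ℚ)/12) * hu13 + ((-1 : ℚ)/3) * hu14 + ((-1 : ℚ)/2) * hJ2 + ((-1 : ℚ)/2) * hJ4 + (1 : ℚ) * hK1
      have hv22 : coeff (expo ![0,1,0,1,1,0]) P = (-2 : ℚ) * coeff (expo ![0,0,1,1,0,1]) P + (-1 : ℚ) * coeff (expo ![0,0,0,1,1,1]) P := by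
        linear_combination (-2 : ℚ) * hz11 + ((-1 : ℚ)/2) * hz16 + ((-1 : ℚ)/2) * hz18 + ((-1 : ℚ)/2) * hz19 + ((-1 : ℚ)/2) * hz20 + ((-4 : ℚ)/3) * hz21 + ((-1 : ℚ)/2) * hz26 + ((-1 : ℚ)/2) * hz28 + ((-1 : ℚ)/2) * hz29 + ((-1 : ℚ)/2) * hz30 + ((-4 : ℚ)/3) * hz31 + ((-1 : ℚ)/3) * hz36 + ((-1 : ℚ)/3) * hz39 + ((-1 : ℚ)/3) * hz41 + ((-1 : ℚ)/3) * hz42 + (-1 : ℚ) * hz43 + ((1 : ℚ)/3) * hu0 + ((1 : ℚ)/3) * hu1 + ((1 : ℚ)/3) * hu2 + ((1 : ℚ)/3) * hu3 + ((1 : ℚ)/3) * hu4 + ((1 : ℚ)/3) * hu5 + ((-1 : ℚ)/6) * hu6 + ((-1 : ℚ)/6) * hu7 + ((-1 : ℚ)/6) * hu8 + ((-1 : ℚ)/6) * hu9 + ((-1 : ℚ)/6) * hu10 + ((-1 : ℚ)/6) * hu11 + ((-1 : ℚ)/6) * hu12 + ((-1 : ℚ)/6) * hu13 + ((1 : ℚ)/3)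 * hu14 + (1 : ℚ) * hJ2 + (-1 : ℚ) * hK1
      have hv25 : coeff (expo ![0,1,1,0,0,1]) P = (-1 : ℚ) * coeff (expo ![0,0,1,1,0,1]) P + (0 : ℚ) * coeff (expo ![0,0,0,1,1,1]) P := by
        linear_combination (-1 : ℚ) * hz11 + ((1 : ℚ)/2) * hz16 + (-1 : ℚ) * hz18 + (-1 : ℚ) * hz19 + ((1 : ℚ)/2) * hz20 + ((-2 : ℚ)/3) * hz21 + ((-1 : ℚ)/2) * hz28 + ((-1 : ℚ)/2) * hz29 + ((-2 : ℚ)/3) * hz31 + ((1 : ℚ)/2) * hz35 + ((1 : ℚ)/3) * hz36 + ((-1 : ℚ)/2) * hz37 + ((-2 : ℚ)/3) * hz39 + ((-2 : ℚ)/3) * hz41 + ((1 : ℚ)/3) * hz42 + ((-1 : ℚ)/2) * hz43 + ((1 : ℚ)/6) * hu0 + ((1 : ℚ)/6) * hu1 + ((-1 : ℚ)/3) * hu2 + ((2 : ℚ)/3) * hu3 + ((1 : ℚ)/6) * hu4 + ((1 : ℚ)/6) * hu5 + ((1 : ℚ)/6) * hu6 + ((-1 : ℚ)/3) * hu7 +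 ((-1 : ℚ)/3) * hu8 + ((1 : ℚ)/6) * hu9 + ((-1 : ℚ)/3) * hu10 + ((1 : ℚ)/6) * hu11 + ((1 : ℚ)/6) * hu12 + ((-1 : ℚ)/3) * hu13 + ((1 : ℚ)/6) * hu14 + (-1 : ℚ) * hK1
      have hv26 : coeff (expo ![0,1,1,0,1,0]) P = (2 : ℚ) * coeff (expo ![0,0,1,1,0,1]) P + (1 : ℚ) * coeff (expo ![0,0,0,1,1,1]) P := by
        linear_combination (2 : ℚ) * hz11 + ((-1 : ℚ)/4) * hz16 + ((-1 : ℚ)/4) * hz18 + ((3 : ℚ)/4) * hz19 + ((-3 : ℚ)/4) * hz20 + ((1 : ℚ)/2) * hz21 + ((3 : ℚ)/4) * hz26 + ((3 : ℚ)/4) * hz28 + ((3 : ℚ)/4) * hz29 + ((1 : ℚ)/4) * hz30 + ((3 : ℚ)/2) * hz31 + ((-1 : ℚ)/2) * hz35 + ((-1 : ℚ)/2) * hz38 + ((1 : ℚ)/2) * hz41 + ((-1 : ℚ)/2) * hz42 + ((1 : ℚ)/2) * hz43 + ((-1 : ℚ)/2) * hu0 + ((-1 : ℚ)/2) * hu1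 + ((-1 : ℚ)/2) * hu3 + ((-1 : ℚ)/2) * hu5 + ((1 : ℚ)/4) * hu6 + ((3 : ℚ)/4) * hu7 + ((1 : ℚ)/4) * hu8 + ((1 : ℚ)/4) * hu9 + ((1 : ℚ)/4) * hu10 + ((-1 : ℚ)/4) * hu11 + ((1 : ℚ)/4) * hu12 + ((1 : ℚ)/4) * hu13 + ((-1 : ℚ)/2) * hu14 + ((-1 : ℚ)/2) * hJ2 + ((-1 : ℚ)/2) * hJ4 + (1 : ℚ) * hK1
      have hv28 : coeff (expo ![0,1,1,1,0,0]) P = (-1 : ℚ) * coeff (expo ![0,0,1,1,0,1]) P + (0 : ℚ) * coeff (expo ![0,0,0,1,1,1]) P := by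
        linear_combination ((-1 : ℚ)/2) * hz11 + ((1 : ℚ)/4) * hz16 + ((1 : ℚ)/4) * hz18 + ((-3 : ℚ)/4) * hz19 + ((-3 : ℚ)/4) * hz20 + ((-1 : ℚ)/2) * hz21 + ((-1 : ℚ)/4) * hz26 + ((-1 : ℚ)/4) * hz28 + ((-1 : ℚ)/4) * hz29 + ((-1 : ℚ)/4) * hz30 + ((-1 : ℚ)/2) * hz31 + ((-1 : ℚ)/2) * hz40 + ((-1 : ℚ)/2) * hz41 + ((-1 : ℚ)/2) * hz42 + ((-1 : ℚ)/2) * hz43 + ((1 : ℚ)/2) * hu5 + ((-1 : ℚ)/4) * hu6 + ((-1 : ℚ)/4) * hu7 + ((1 : ℚ)/4) * hu8 + ((1 : ℚ)/4) * hu9 + ((1 : ℚ)/4) * hu10 + ((1 : ℚ)/4) * hu11 + ((-1 : ℚ)/4) * hu12 + ((-1 : ℚ)/4) * hu13 + ((1 : ℚ)/2) * hJ2 + ((1 : ℚ)/2) * hJ4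
      have hv35 : coeff (expo ![1,0,0,0,1,1]) P = (1 : ℚ) * coeff (expo ![0,0,1,1,0,1]) P + (0 : ℚ) * coeff (expo ![0,0,0,1,1,1]) P := by
        linear_combination ((1 : ℚ)/2) * hz11 + ((-1 : ℚ)/4) * hz16 + ((-1 : ℚ)/4) * hz18 + ((1 : ℚ)/4) * hz19 + ((1 : ℚ)/4) * hz20 + ((1 : ℚ)/6) * hz21 + ((-1 : ℚ)/4) * hz26 + ((-1 : ℚ)/4) * hz28 + ((1 : ℚ)/4) * hz29 + ((1 : ℚ)/4) * hz30 + ((1 : ℚ)/6) * hz31 + ((-1 : ℚ)/2) * hz33 + ((-1 : ℚ)/3) * hz36 + ((-1 : ℚ)/3) * hz39 + ((1 : ℚ)/6) * hz41 + ((1 : ℚ)/6) * hz42 + ((1 : ℚ)/3) * hu0 + ((-1 : ℚ)/6) * hu1 + ((-1 : ℚ)/6) * hu2 + ((-1 : ℚ)/6) * hu3 + ((-1 : ℚ)/6) * hu4 + ((-1 : ℚ)/6) * hu5 + ((1 : ℚ)/12) * hu6 + ((1 : ℚ)/12) * hu7 + ((1 : ℚ)/12) * hu8 + ((1 : ℚ)/12)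 * hu9 + ((1 : ℚ)/12) * hu10 + ((1 : ℚ)/12) * hu11 + ((1 : ℚ)/12) * hu12 + ((1 : ℚ)/12) * hu13 + ((-1 : ℚ)/6) * hu14 + ((-1 : ℚ)/2) * hJ2 + ((-1 : ℚ)/2) * hJ4
      have hv37 : coeff (expo ![1,0,0,1,0,1]) P = (-2 : ℚ) * coeff (expo ![0,0,1,1,0,1]) P + (-1 : ℚ) * coeff (expo ![0,0,0,1,1,1]) P := by
        linear_combination (-2 : ℚ) * hz11 + ((1 : ℚ)/4) * hz16 + ((-1 : ℚ)/4) * hz18 + ((-3 : ℚ)/4) * hz19 + ((1 : ℚ)/4) * hz20 + ((-5 : ℚ)/6) * hz21 + ((-5 : ℚ)/4) * hz26 + ((-3 : ℚ)/4) * hz28 + ((-5 : ℚ)/4) * hz29 + ((-1 : ℚ)/4) * hz30 + ((-11 : ℚ)/6) * hz31 + ((-1 : ℚ)/2) * hz34 + ((1 : ℚ)/2) * hz35 + ((-1 : ℚ)/3) * hz36 + ((-1 : ℚ)/3) * hz39 + ((-5 : ℚ)/6) * hz41 + ((1 : ℚ)/6) * hz42 + (-1 : ℚ) * hz43 + ((1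 : ℚ)/3) * hu0 + ((5 : ℚ)/6) * hu1 + ((-1 : ℚ)/6) * hu2 + ((1 : ℚ)/3) * hu3 + ((1 : ℚ)/3) * hu4 + ((1 : ℚ)/3) * hu5 + ((-5 : ℚ)/12) * hu6 + ((-5 : ℚ)/12) * hu7 + ((-5 : ℚ)/12) * hu8 + ((1 : ℚ)/12) * hu9 + ((1 : ℚ)/12) * hu10 + ((1 : ℚ)/12) * hu11 + ((1 : ℚ)/12) * hu12 + ((-5 : ℚ)/12) * hu13 + ((1 : ℚ)/3) * hu14 + ((1 : ℚ)/2) * hJ2 + ((1 : ℚ)/2) * hJ4 + (-1 : ℚ) * hK1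
      have hv38 : coeff (expo ![1,0,0,1,1,0]) P = (1 : ℚ) * coeff (expo ![0,0,1,1,0,1]) P + (0 : ℚ) * coeff (expo ![0,0,0,1,1,1]) P := by
        linear_combination (1 : ℚ) * hz11 + ((-1 : ℚ)/2) * hz16 + ((1 : ℚ)/2) * hz18 + ((1 : ℚ)/2) * hz19 + ((-1 : ℚ)/2) * hz20 + ((1 : ℚ)/3) * hz21 + ((-1 : ℚ)/2) * hz26 + ((1 : ℚ)/2) * hz28 + ((1 : ℚ)/2) * hz29 + ((-1 : ℚ)/2) * hz30 + ((1 : ℚ)/3) * hz31 + (-1 : ℚ) * hz35 + ((-2 : ℚ)/3) * hz36 + ((1 : ℚ)/3) * hz39 + ((1 : ℚ)/3) * hz41 + ((-2 : ℚ)/3) * hz42 + ((-1 : ℚ)/3) * hu0 + ((-1 : ℚ)/3) * hu1 + ((2 : ℚ)/3) * hu2 + ((-1 : ℚ)/3) * hu3 + ((-1 : ℚ)/3) * hu4 + ((-1 : ℚ)/3) * hu5 + ((1 : ℚ)/6) * hu6 + ((1 : ℚ)/6) * hu7 + ((1 : ℚ)/6) * hu8 + ((1 : ℚ)/6) * hu9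 + ((1 : ℚ)/6) * hu10 + ((1 : ℚ)/6) * hu11 + ((1 : ℚ)/6) * hu12 + ((1 : ℚ)/6) * hu13 + ((-1 : ℚ)/3) * hu14 + (1 : ℚ) * hK1
      have hv41 : coeff (expo ![1,0,1,0,0,1]) P = (2 : ℚ) * coeff (expo ![0,0,1,1,0,1]) P + (1 : ℚ) * coeff (expo ![0,0,0,1,1,1]) P := by
        linear_combination (2 : ℚ) * hz11 + ((1 : ℚ)/2) * hz18 + ((1 : ℚ)/2) * hz19 + (1 : ℚ) * hz21 + ((1 : ℚ)/2) * hz26 + ((1 : ℚ)/2) * hz30 + (1 : ℚ) * hz31 + ((-1 : ℚ)/2) * hz35 + ((-1 : ℚ)/2) * hz37 + ((1 : ℚ)/2) * hz43 + ((-1 : ℚ)/2) * hu0 + ((-1 : ℚ)/2) * hu1 + ((-1 : ℚ)/2) * hu4 + ((-1 : ℚ)/2) * hu5 + ((1 : ℚ)/2) * hu7 + ((1 : ℚ)/2) * hu8 + ((1 : ℚ)/2) * hu10 + ((1 : ℚ)/2) * hu13 + ((-1 : ℚ)/2) * hu14 + (-1 : ℚ) * hJ2 + (1 : ℚ) * 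hK1
      have hv42 : coeff (expo ![1,0,1,0,1,0]) P = (-1 : ℚ) * coeff (expo ![0,0,1,1,0,1]) P + (0 : ℚ) * coeff (expo ![0,0,0,1,1,1]) P := by
        linear_combination (-1 : ℚ) * hz11 + ((3 : ℚ)/4) * hz16 + ((-1 : ℚ)/4) * hz18 + ((-1 : ℚ)/4) * hz19 + ((1 : ℚ)/4) * hz20 + ((-1 : ℚ)/6) * hz21 + ((-1 : ℚ)/4) * hz26 + ((-5 : ℚ)/4) * hz28 + ((-1 : ℚ)/4) * hz29 + ((-3 : ℚ)/4) * hz30 + ((-7 : ℚ)/6) * hz31 + ((1 : ℚ)/2) * hz35 + ((1 : ℚ)/3) * hz36 + ((-1 : ℚ)/2) * hz38 + ((-2 : ℚ)/3) * hz39 + ((-1 : ℚ)/6) * hz41 + ((-1 : ℚ)/6) * hz42 + ((-1 : ℚ)/2) * hz43 + ((1 : ℚ)/6) * hu0 + ((1 : ℚ)/6) * hu1 + ((-1 : ℚ)/3) * hu2 + ((1 : ℚ)/6) * hu3 + ((2 : ℚ)/3) * hu4 + ((1 : ℚ)/6) * hu5 + ((-1 : ℚ)/12) * hu6 + ((-7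 : ℚ)/12) * hu7 + ((-1 : ℚ)/12) * hu8 + ((-1 : ℚ)/12) * hu9 + ((-1 : ℚ)/12) * hu10 + ((5 : ℚ)/12) * hu11 + ((-1 : ℚ)/12) * hu12 + ((-1 : ℚ)/12) * hu13 + ((1 : ℚ)/6) * hu14 + ((1 : ℚ)/2) * hJ2 + ((1 : ℚ)/2) * hJ4 + (-1 : ℚ) * hK1
      have hv44 : coeff (expo ![1,0,1,1,0,0]) P = (-1 : ℚ) * coeff (expo ![0,0,1,1,0,1]) P + (0 : ℚ) * coeff (expo ![0,0,0,1,1,1]) P := by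
        linear_combination ((-1 : ℚ)/2) * hz11 + ((-1 : ℚ)/4) * hz16 + ((-1 : ℚ)/4) * hz18 + ((-1 : ℚ)/4) * hz19 + ((-1 : ℚ)/4) * hz20 + ((-1 : ℚ)/2) * hz21 + ((1 : ℚ)/4) * hz26 + ((1 : ℚ)/4) * hz28 + ((-3 : ℚ)/4) * hz29 + ((-3 : ℚ)/4) * hz30 + ((-1 : ℚ)/2) * hz31 + ((-1 : ℚ)/2) * hz40 + ((-1 : ℚ)/2) * hz41 + ((-1 : ℚ)/2) * hz42 + ((-1 : ℚ)/2) * hz43 + ((1 : ℚ)/2) * hu5 + ((1 : ℚ)/4) * hu6 + ((1 : ℚ)/4) * hu7 + ((-1 : ℚ)/4) * hu8 + ((-1 : ℚ)/4) * hu9 + ((-1 : ℚ)/4) * hu10 + ((-1 : ℚ)/4) * hu11 + ((1 : ℚ)/4) * hu12 + ((1 : ℚ)/4) * hu13 + ((1 : ℚ)/2) * hJ2 + ((-1 : ℚ)/2) * hJ4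
      have hv49 : coeff (expo ![1,1,0,0,0,1]) P = (-1 : ℚ) * coeff (expo ![0,0,1,1,0,1]) P + (0 : ℚ) * coeff (expo ![0,0,0,1,1,1]) P := by
        linear_combination ((-1 : ℚ)/2) * hz11 + ((-1 : ℚ)/2) * hz20 + ((-1 : ℚ)/3) * hz21 + ((-1 : ℚ)/2) * hz30 + ((-1 : ℚ)/3) * hz31 + ((-1 : ℚ)/2) * hz33 + ((-1 : ℚ)/2) * hz34 + ((-1 : ℚ)/3) * hz36 + ((-1 : ℚ)/2) * hz37 + ((-1 : ℚ)/3) * hz39 + ((-1 : ℚ)/3) * hz41 + ((-1 : ℚ)/3) * hz42 + ((-1 : ℚ)/2) * hz43 + ((-1 : ℚ)/6) * hu0 + ((-1 : ℚ)/6) * hu1 + ((1 : ℚ)/3) * hu2 + ((-1 : ℚ)/6) * hu3 + ((1 : ℚ)/3) * hu4 + ((1 : ℚ)/3) * hu5 + ((1 : ℚ)/3) * hu6 + ((-1 : ℚ)/6) * hu7 + ((-1 : ℚ)/6) * hu8 + ((-1 : ℚ)/6) * hu9 + ((1 : ℚ)/3) * hu10 + ((-1 : ℚ)/6) * hu11 +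 ((-1 : ℚ)/6) * hu12 + ((-1 : ℚ)/6) * hu13 + ((1 : ℚ)/3) * hu14 + (1 : ℚ) * hJ2
      have hv50 : coeff (expo ![1,1,0,0,1,0]) P = (-1 : ℚ) * coeff (expo ![0,0,1,1,0,1]) P + (0 : ℚ) * coeff (expo ![0,0,0,1,1,1]) P := by
        linear_combination ((-1 : ℚ)/2) * hz11 + ((-1 : ℚ)/2) * hz19 + ((-1 : ℚ)/3) * hz21 + ((-1 : ℚ)/2) * hz29 + ((-1 : ℚ)/3) * hz31 + ((-1 : ℚ)/2) * hz33 + ((-1 : ℚ)/2) * hz35 + ((-1 : ℚ)/3) * hz36 + ((-1 : ℚ)/2) * hz38 + ((-1 : ℚ)/3) * hz39 + ((-1 : ℚ)/3) * hz41 + ((-1 : ℚ)/3) * hz42 + ((-1 : ℚ)/2) * hz43 + ((-1 : ℚ)/6) * hu0 + ((1 : ℚ)/3) * hu1 + ((-1 : ℚ)/6) * hu2 + ((1 : ℚ)/3) * hu3 + ((-1 : ℚ)/6) * hu4 + ((1 : ℚ)/3) * hu5 + ((-1 : ℚ)/6) * hu6 + ((1 : ℚ)/3) * hu7 + ((-1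 : ℚ)/6) * hu8 + ((-1 : ℚ)/6) * hu9 + ((-1 : ℚ)/6) * hu10 + ((1 : ℚ)/3) * hu11 + ((-1 : ℚ)/6) * hu12 + ((-1 : ℚ)/6) * hu13 + ((1 : ℚ)/3) * hu14
      have hv52 : coeff (expo ![1,1,0,1,0,0]) P = (2 : ℚ) * coeff (expo ![0,0,1,1,0,1]) P + (1 : ℚ) * coeff (expo ![0,0,0,1,1,1]) P := by
        linear_combination ((3 : ℚ)/2) * hz11 + ((1 : ℚ)/2) * hz16 + ((1 : ℚ)/2) * hz19 + ((1 : ℚ)/2) * hz20 + (1 : ℚ) * hz21 + ((1 : ℚ)/2) * hz26 + ((1 : ℚ)/2) * hz29 + ((1 : ℚ)/2) * hz30 + (1 : ℚ) * hz31 + ((-1 : ℚ)/2) * hz34 + ((-1 : ℚ)/2) * hz35 + ((-1 : ℚ)/2) * hz40 + ((1 : ℚ)/2) * hz43 + ((-1 : ℚ)/2) * hu1 + ((-1 : ℚ)/2) * hu2 + ((-1 : ℚ)/2) * hu5 + ((1 : ℚ)/2) * hu8 + ((1 : ℚ)/2) * hu12 + (-1 : ℚ) * hJ2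
      have hv56 : coeff (expo ![1,1,1,0,0,0]) P = (0 : ℚ) * coeff (expo ![0,0,1,1,0,1]) P + (-1 : ℚ) * coeff (expo ![0,0,0,1,1,1]) P := by
        linear_combination ((-1 : ℚ)/2) * hz11 + ((-1 : ℚ)/2) * hz16 + ((-1 : ℚ)/3) * hz21 + ((-1 : ℚ)/2) * hz26 + ((-1 : ℚ)/3) * hz31 + ((-1 : ℚ)/3) * hz36 + ((-1 : ℚ)/2) * hz37 + ((-1 : ℚ)/2) * hz38 + ((-1 : ℚ)/3) * hz39 + ((-1 : ℚ)/2) * hz40 + ((-1 : ℚ)/3) * hz41 + ((-1 : ℚ)/3) * hz42 + ((-1 : ℚ)/2) * hz43 + ((1 : ℚ)/3) * hu0 + ((1 : ℚ)/3) * hu1 + ((1 : ℚ)/3) * hu2 + ((-1 : ℚ)/6) * hu3 + ((-1 : ℚ)/6) * hu4 + ((-1 : ℚ)/6) * hu5 + ((-1 : ℚ)/6) * hu6 + ((-1 : ℚ)/6) * hu7 + ((-1 : ℚ)/6) * hu8 + ((1 : ℚ)/3) * hu9 + ((-1 : ℚ)/6) * hu10 + ((-1 : ℚ)/6) * hu11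 + ((-1 : ℚ)/6) * hu12 + ((1 : ℚ)/3) * hu13 + ((1 : ℚ)/3) * hu14
      refine ⟨coeff (expo ![0,0,1,1,0,1]) P, coeff (expo ![0,0,0,1,1,1]) P + 2 * coeff (expo ![0,0,1,1,0,1]) P, ?_⟩
      conv_lhs => rw [hdec]
      rw [sum_fun6]
      simp only [Fin.sum_univ_two]
      rw [hz0, hz1, hz2, hz3, hz4, hz5, hz6, hz7, hz8, hz9, hz10, hz11, hz12, hz13, hz14, hz15, hz16, hz17, hz18, hz19, hz20, hz21, hz22, hz23, hz24, hz25, hz26, hz27, hz28, hz29, hz30, hz31, hz32, hz33, hz34, hz35, hz36, hz37, hz38, hz39, hz40, hz41, hz42, hz43, hv11, hv14, hv19, hv21, hv22, hv25, hv26, hv28, hv35, hv37, hv38, hv41, hv42, hv44, hv49, hv50, hv52, hv56]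
      rw [SP_eq, BP_eq]
      simp only [smul_eq_C_mul, map_add, map_mul, map_neg, map_ofNat, map_one, map_zero]
      ring
    · rintro ⟨α, β, rfl⟩
      refine ⟨?_, ?_, ?_, ?_, ?_⟩
      · rw [Multilin, ← mem_weightedHomogeneousSubmodule]
        exact Submodule.add_mem _
          (Submodule.smul_mem _ _ ((mem_weightedHomogeneousSubmodule _ _ _ _).mpr multilin_SP))
          (Submodule.smul_mem _ _ ((mem_weightedHomogeneousSubmodule _ _ _ _).mpr multilin_BP))
      · intro g
        simp only [smul_eq_C_mul, map_add, map_mul, aeval_C, algebraMap_eq,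
          SL2_SP g, SL2_BP g]
      · rw [exchange_add_smul, exch_J_SP, exch_J_BP]
      · rw [exchange_add_smul, exch_K_SP, exch_K_BP]
      · rw [exchange_add_smul, exch_L_SP, exch_L_BP, smul_neg, smul_neg, neg_add]
  · rw [LinearIndependent.pair_iff]
    intro s t hst
    have h1 := congrArg (coeff (expo ![0,0,1,1,0,1])) hst
    have h2 := congrArg (coeff (expo ![0,0,0,1,1,1])) hst
    simp only [coeff_add, coeff_smul, coeff_zero, coeff_SP_A, coeff_SP_B,
      coeff_BP_A, coeff_BP_B, smul_eq_mul] at h1 h2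
    exact ⟨by linarith, by linarith⟩
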